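/- arXiv:2203.07826 — 7 statements merged into one kernel-verified Lean document; each statement's English description precedes it below -/
import Mathlib

section
/- There exists C > 0 such that for all h > 0 and ξ ∈ ℝ with hξ ∈ [-3π/2, 3π/2] and ξ ≠ 0, the operator norm of (G₀ₕᶠᵇ(ξ) - iI)⁻¹ is at most C/|ξ|. -/
noncomputable def matOpNorm {n : Type*} [Fintype n] [DecidableEq n]
    (A : Matrix n n ℂ) : ℝ :=
  ‖Matrix.toEuclideanCLM (𝕜 := ℂ) A‖

noncomputable def G0fb (h m ξ : ℝ) : Matrix (Fin 2) (Fin 2) ℂ :=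
  !![(m : ℂ), -(1 / (Complex.I * h)) * (Complex.exp (-(Complex.I) * h * ξ) - 1);
     (1 / (Complex.I * h)) * (Complex.exp (Complex.I * h * ξ) - 1), (-m : ℂ)]

private lemma sin_lb' {θ : ℝ} (h0 : 0 ≤ θ) (h1 : θ ≤ 3*Real.pi/4) : θ/5 ≤ Real.sin θ := by
  have hπ := Real.pi_pos
  rcases le_or_gt θ (Real.pi/2) with h | h
  · have h5 : (1:ℝ)/5 ≤ 2/Real.pi := by
      rw [div_le_div_iff₀ (by norm_num) hπ]; nlinarith [Real.pi_lt_d2]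
    calc θ/5 = 1/5 * θ := by ring
      _ ≤ 2/Real.pi * θ := mul_le_mul_of_nonneg_right h5 h0
      _ ≤ Real.sin θ := Real.mul_le_sin h0 h
  · have h2 : 0 ≤ Real.pi - θ := by nlinarith
    have h3 : Real.pi - θ ≤ Real.pi/2 := by linarith
    have hs := Real.mul_le_sin h2 h3
    rw [Real.sin_pi_sub] at hs
    have key : θ/5 ≤ 2/Real.pi * (Real.pi - θ) := by
      rw [div_mul_eq_mul_div, div_le_div_iff₀ (by norm_num) hπ]
      nlinarith [Real.pi_lt_d2]
    linarith

private lemma matOpNorm_le_entries (A : Matrix (Fin 2) (Fin 2) ℂ) (M : ℝ) (hM : 0 ≤ M)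
    (hA : ∀ i j, ‖A i j‖ ≤ M) : matOpNorm A ≤ 3 * M := by
  apply ContinuousLinearMap.opNorm_le_bound _ (by positivity)
  intro x
  set y := Matrix.toEuclideanCLM (𝕜 := ℂ) A x with hy
  have hcomp : ∀ i, y i = A.mulVec (⇑(WithLp.equiv 2 (Fin 2 → ℂ)) x) i := by
    intro i
    exact congrFun (Matrix.ofLp_toEuclideanCLM (𝕜 := ℂ) A x) i
  have hxnorm : ‖x‖ = Real.sqrt (‖x 0‖^2 + ‖x 1‖^2) := by
    rw [EuclideanSpace.norm_eq]; simp [Fin.sum_univ_two]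
  have hxj : ∀ j : Fin 2, ‖x j‖ ≤ ‖x‖ := by
    intro j
    rw [hxnorm]
    rw [show ‖x j‖ = Real.sqrt (‖x j‖^2) from (Real.sqrt_sq (norm_nonneg _)).symm]
    apply Real.sqrt_le_sqrt
    fin_cases j
    · exact le_add_of_nonneg_right (sq_nonneg _)
    · exact le_add_of_nonneg_left (sq_nonneg _)
  have hyi : ∀ i, ‖y i‖ ≤ 2 * M * ‖x‖ := by
    intro i
    rw [hcomp i]
    have he : A.mulVec (⇑(WithLp.equiv 2 (Fin 2 → ℂ)) x) i = A i 0 * x 0 + A i 1 * x 1 := by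
      simp [Matrix.mulVec, dotProduct, Fin.sum_univ_two]
    rw [he]
    calc ‖A i 0 * x 0 + A i 1 * x 1‖ ≤ ‖A i 0 * x 0‖ + ‖A i 1 * x 1‖ := norm_add_le _ _
      _ = ‖A i 0‖ * ‖x 0‖ + ‖A i 1‖ * ‖x 1‖ := by rw [norm_mul, norm_mul]
      _ ≤ M * ‖x‖ + M * ‖x‖ := by
          gcongr <;> [exact hA i 0; exact hxj 0; exact hA i 1; exact hxj 1]
      _ = 2 * M * ‖x‖ := by ring
  have hnorm : ‖y‖ = Real.sqrt (‖y 0‖^2 + ‖y 1‖^2) := by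
    rw [EuclideanSpace.norm_eq]; simp [Fin.sum_univ_two]
  rw [hnorm]
  have hle : ‖y 0‖^2 + ‖y 1‖^2 ≤ (3 * M * ‖x‖)^2 := by
    have h0 := hyi 0; have h1 := hyi 1
    nlinarith [norm_nonneg (y 0), norm_nonneg (y 1), norm_nonneg x,
      mul_nonneg (mul_nonneg (by norm_num : (0:ℝ) ≤ 2) hM) (norm_nonneg x)]
  calc Real.sqrt (‖y 0‖^2 + ‖y 1‖^2) ≤ Real.sqrt ((3 * M * ‖x‖)^2) := Real.sqrt_le_sqrt hle
    _ = 3 * M * ‖x‖ := Real.sqrt_sq (by positivity)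

private lemma exp_sub_one_norm_sq (x : ℝ) :
    ‖Complex.exp ((x:ℂ) * Complex.I) - 1‖^2 = 2 - 2*Real.cos x := by
  rw [Complex.sq_norm, Complex.normSq_apply]
  simp only [Complex.sub_re, Complex.sub_im, Complex.one_re, Complex.one_im,
    Complex.exp_ofReal_mul_I_re, Complex.exp_ofReal_mul_I_im]
  nlinarith [Real.sin_sq_add_cos_sq x]

private lemma norm_sq_c (z : ℂ) : ‖z‖^2 = z.re^2 + z.im^2 := by
  rw [Complex.sq_norm, Complex.normSq_apply]; ring

set_option maxHeartbeats 1000000 in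
theorem G0fb_resolvent_bound (m : ℝ) (hm : 0 ≤ m) :
    ∃ C > 0, ∀ h : ℝ, 0 < h → ∀ ξ : ℝ, ξ ≠ 0 →
      h * ξ ∈ Set.Icc (-(3 * Real.pi / 2)) (3 * Real.pi / 2) →
      matOpNorm ((G0fb h m ξ - Complex.I • (1 : Matrix (Fin 2) (Fin 2) ℂ))⁻¹)
        ≤ C / |ξ| := by
  refine ⟨15, by norm_num, ?_⟩
  intro h hh ξ hξ hmem
  obtain ⟨hmem1, hmem2⟩ := hmem
  set θ := h * ξ with hθ
  set A := G0fb h m ξ - Complex.I • (1 : Matrix (Fin 2) (Fin 2) ℂ) with hA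
  have hh' : (h:ℂ) ≠ 0 := by exact_mod_cast hh.ne'
  -- entries of A
  have hA00 : A 0 0 = (m:ℂ) - Complex.I := by
    simp [hA, G0fb, Matrix.sub_apply, Matrix.smul_apply, Matrix.one_apply]
  have hA11 : A 1 1 = -(m:ℂ) - Complex.I := by
    simp [hA, G0fb, Matrix.sub_apply, Matrix.smul_apply, Matrix.one_apply]
  have hA01 : A 0 1 = -(1 / (Complex.I * h)) * (Complex.exp (-(Complex.I) * h * ξ) - 1) := by
    simp [hA, G0fb, Matrix.sub_apply, Matrix.smul_apply, Matrix.one_apply]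
  have hA10 : A 1 0 = (1 / (Complex.I * h)) * (Complex.exp (Complex.I * h * ξ) - 1) := by
    simp [hA, G0fb, Matrix.sub_apply, Matrix.smul_apply, Matrix.one_apply]
  -- the key real quantities
  set s2 : ℝ := (2 - 2*Real.cos θ)/h^2 with hs2
  set K : ℝ := m^2 + 1 + s2 with hK
  have hs2nn : 0 ≤ s2 := by
    have h1 := Real.cos_le_one θ
    have h2 : 0 ≤ 2 - 2*Real.cos θ := by linarith
    positivity
  have hKpos : 0 < K := by positivity
  -- exponential facts
  have heP : Complex.I * h * ξ = ((θ:ℝ):ℂ) * Complex.I := by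
    rw [hθ]; push_cast; ring
  have heM : -(Complex.I) * h * ξ = ((-θ:ℝ):ℂ) * Complex.I := by
    rw [hθ]; push_cast; ring
  have hmul : Complex.exp (Complex.I * h * ξ) * Complex.exp (-(Complex.I) * h * ξ) = 1 := by
    rw [← Complex.exp_add, show Complex.I * h * ξ + -(Complex.I) * h * ξ = 0 by ring,
      Complex.exp_zero]
  have hsum : Complex.exp (Complex.I * h * ξ) + Complex.exp (-(Complex.I) * h * ξ)
      = 2 * ((Real.cos θ : ℝ) : ℂ) := by
    rw [heP, heM, Complex.exp_mul_I, Complex.exp_mul_I]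
    push_cast
    rw [Complex.cos_neg, Complex.sin_neg, ← Complex.ofReal_cos]
    ring
  have hI2 : Complex.I^2 = -1 := Complex.I_sq
  -- determinant
  have hKc : ((K:ℝ):ℂ) = (m:ℂ)^2 + 1 + (2 - 2*((Real.cos θ : ℝ):ℂ))/(h:ℂ)^2 := by
    rw [hK, hs2]; push_cast; ring
  have hprod : A 0 1 * A 1 0 =
      (Complex.exp (-(Complex.I) * h * ξ) - 1) * (Complex.exp (Complex.I * h * ξ) - 1)
        / (h:ℂ)^2 := by
    rw [hA01, hA10,
      show -(1 / (Complex.I * (h:ℂ))) * (Complex.exp (-(Complex.I) * h * ξ) - 1) *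
        (1 / (Complex.I * (h:ℂ)) * (Complex.exp (Complex.I * h * ξ) - 1)) =
        -((Complex.exp (-(Complex.I) * h * ξ) - 1) * (Complex.exp (Complex.I * h * ξ) - 1)
          / ((Complex.I * (h:ℂ))^2)) by ring,
      show (Complex.I * (h:ℂ))^2 = -((h:ℂ)^2) by rw [mul_pow, Complex.I_sq]; ring,
      div_neg, neg_neg]
  have hdet : A.det = -((K:ℝ):ℂ) := by
    rw [Matrix.det_fin_two, hprod, hA00, hA11, hKc]
    linear_combination hI2 - hmul/(h:ℂ)^2 + hsum/(h:ℂ)^2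
  have hdetne : A.det ≠ 0 := by
    rw [hdet, neg_ne_zero]
    exact_mod_cast hKpos.ne'
  -- inverse
  have hinv : A⁻¹ = (A.det)⁻¹ • A.adjugate := by
    rw [Matrix.inv_def, Ring.inverse_eq_inv']
  have hadj : A.adjugate = !![A 1 1, -(A 0 1); -(A 1 0), A 0 0] := Matrix.adjugate_fin_two A
  have hdetnorm : ‖(A.det)⁻¹‖ = K⁻¹ := by
    rw [hdet, norm_inv, norm_neg, Complex.norm_real, Real.norm_eq_abs, abs_of_pos hKpos]
  -- entry norms (squared) of adjugate entries
  have hsqK : Real.sqrt K * Real.sqrt K = K := Real.mul_self_sqrt hKpos.le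
  have hsqKpos : 0 < Real.sqrt K := Real.sqrt_pos.2 hKpos
  have entry_le : ∀ z : ℂ, ‖z‖^2 ≤ K → ‖z‖ ≤ Real.sqrt K := by
    intro z hz
    rw [show ‖z‖ = Real.sqrt (‖z‖^2) from (Real.sqrt_sq (norm_nonneg _)).symm]
    exact Real.sqrt_le_sqrt hz
  have n00 : ‖A 0 0‖^2 ≤ K := by
    rw [hA00, norm_sq_c]
    simp [Complex.sub_re, Complex.sub_im]
    linarith [hs2nn]
  have n11 : ‖A 1 1‖^2 ≤ K := by
    rw [hA11, norm_sq_c]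
    simp [Complex.sub_re, Complex.sub_im]
    linarith [hs2nn]
  have hoff : ∀ (x : ℝ), ‖(1 / (Complex.I * (h:ℂ))) * (Complex.exp ((x:ℂ) * Complex.I) - 1)‖^2
      = (2 - 2*Real.cos x)/h^2 := by
    intro x
    rw [norm_mul, mul_pow, exp_sub_one_norm_sq]
    have : ‖1 / (Complex.I * (h:ℂ))‖ = 1/h := by
      rw [norm_div, norm_mul, norm_one, Complex.norm_I, Complex.norm_real,
        Real.norm_eq_abs, abs_of_pos hh, one_mul]
    rw [this]
    field_simp
  have n01 : ‖A 0 1‖^2 ≤ K := by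
    rw [hA01, heM, neg_mul, norm_neg, hoff (-θ), Real.cos_neg]
    rw [hK]; linarith [sq_nonneg m]
  have n10 : ‖A 1 0‖^2 ≤ K := by
    rw [hA10, heP, hoff θ, hK]
    linarith [sq_nonneg m]
  -- entries of A⁻¹ bounded by (√K)⁻¹
  have hbound : ∀ i j, ‖A⁻¹ i j‖ ≤ (Real.sqrt K)⁻¹ := by
    intro i j
    rw [hinv, Matrix.smul_apply, smul_eq_mul, norm_mul, hdetnorm]
    have hentry : ‖A.adjugate i j‖ ≤ Real.sqrt K := by
      fin_cases i <;> fin_cases j <;> simp only [hadj, Fin.mk_zero, Fin.mk_one,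
          Matrix.cons_val', Matrix.cons_val_zero, Matrix.cons_val_one, Matrix.head_cons,
          Matrix.empty_val', Matrix.cons_val_fin_one, Matrix.head_fin_const]
      · exact entry_le _ n11
      · simpa using entry_le _ n01
      · simpa using entry_le _ n10
      · exact entry_le _ n00
    calc K⁻¹ * ‖A.adjugate i j‖ ≤ K⁻¹ * Real.sqrt K := by
          gcongr
      _ = (Real.sqrt K)⁻¹ := by
          rw [show K⁻¹ = (Real.sqrt K)⁻¹ * (Real.sqrt K)⁻¹ by rw [← mul_inv, hsqK], mul_assoc,
            inv_mul_cancel₀ hsqKpos.ne', mul_one]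
  have hop : matOpNorm A⁻¹ ≤ 3 * (Real.sqrt K)⁻¹ :=
    matOpNorm_le_entries _ _ (by positivity) hbound
  -- lower bound on K
  have hcos : 2 - 2*Real.cos θ = 4 * Real.sin (θ/2)^2 := by
    have hhalf := Real.sin_sq_eq_half_sub (θ/2)
    rw [show 2*(θ/2) = θ by ring] at hhalf
    linarith
  have habs2 : Real.sin (|θ|/2)^2 = Real.sin (θ/2)^2 := by
    rcases abs_cases θ with ⟨h1, _⟩ | ⟨h1, _⟩ <;> rw [h1]
    rw [show -θ/2 = -(θ/2) by ring, Real.sin_neg]; ring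
  have hθabs : |θ| ≤ 3*Real.pi/2 := abs_le.2 ⟨by linarith, hmem2⟩
  have hsinlb : |θ|/10 ≤ Real.sin (|θ|/2) := by
    have := sin_lb' (θ := |θ|/2) (by positivity) (by linarith)
    linarith
  have hsinsq : (|θ|/10)^2 ≤ Real.sin (θ/2)^2 := by
    rw [← habs2]
    exact pow_le_pow_left₀ (by positivity) hsinlb 2
  have hK2 : ξ^2/25 ≤ K := by
    have hs2' : s2 = 4*Real.sin (θ/2)^2/h^2 := by rw [hs2, hcos]
    have e1 : θ^2/100 ≤ Real.sin (θ/2)^2 := by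
      rw [show θ^2/100 = (|θ|/10)^2 by rw [div_pow, sq_abs]; norm_num]
      exact hsinsq
    have key : ξ^2/25 ≤ 4*Real.sin (θ/2)^2/h^2 := by
      rw [div_le_div_iff₀ (by norm_num) (by positivity)]
      have e2 : θ^2 = h^2*ξ^2 := by rw [hθ]; ring
      linarith [e1, e2]
    rw [hK, hs2']
    linarith [key, sq_nonneg m]
  -- conclude
  have hxpos : 0 < |ξ| := abs_pos.2 hξ
  have h5 : |ξ|/5 ≤ Real.sqrt K := by
    have hmono := Real.sqrt_le_sqrt hK2
    rwa [show ξ^2/25 = (|ξ|/5)^2 by rw [← sq_abs]; ring, Real.sqrt_sq (by positivity)] at hmono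
  have hfin : (Real.sqrt K)⁻¹ ≤ 5/|ξ| := by
    have hi := inv_anti₀ (by positivity : (0:ℝ) < |ξ|/5) h5
    rwa [inv_div] at hi
  calc matOpNorm A⁻¹ ≤ 3 * (Real.sqrt K)⁻¹ := hop
    _ ≤ 3 * (5/|ξ|) := by gcongr
    _ = 15/|ξ| := by ring
end

section
/- There exists C > 0 such that for all h ∈ (0,1] and ξ ∈ ℝ with hξ ∈ [-3π/2, 3π/2], the operator norm of (G₀(ξ) - iI)⁻¹ - (G₀ₕᶠᵇ(ξ) - iI)⁻¹ is at most Ch. -/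
open Complex Real

noncomputable def G0 (m ξ : ℝ) : Matrix (Fin 2) (Fin 2) ℂ :=
  !![(m : ℂ), (ξ : ℂ); (ξ : ℂ), (-m : ℂ)]

section helpers

noncomputable def Complex.abs : AbsoluteValue ℂ ℝ := NormedField.toAbsoluteValue ℂ

lemma Complex.norm_eq_abs (z : ℂ) : ‖z‖ = Complex.abs z := rfl

lemma Complex.sq_abs (z : ℂ) : Complex.abs z ^ 2 = Complex.normSq z :=
  Complex.sq_norm z

lemma Complex.normSq_eq_abs (z : ℂ) : Complex.normSq z = Complex.abs z ^ 2 :=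
  Complex.normSq_eq_norm_sq z

lemma Complex.abs_I : Complex.abs Complex.I = 1 := Complex.norm_I

lemma Complex.abs_ofReal (r : ℝ) : Complex.abs (r : ℂ) = |r| := Complex.norm_real r

lemma Complex.abs_conj (z : ℂ) : Complex.abs ((starRingEnd ℂ) z) = Complex.abs z :=
  Complex.norm_conj z

lemma Complex.abs_exp_sub_one_sub_id_le {x : ℂ} (hx : Complex.abs x ≤ 1) :
    Complex.abs (Complex.exp x - 1 - x) ≤ Complex.abs x ^ 2 :=
  Complex.norm_exp_sub_one_sub_id_le hx

lemma euclid_norm_eq (x : EuclideanSpace ℂ (Fin 2)) :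
    ‖x‖ = Real.sqrt (‖x 0‖^2 + ‖x 1‖^2) := by
  rw [EuclideanSpace.norm_eq]; simp [Fin.sum_univ_two]

lemma coord_le (x : EuclideanSpace ℂ (Fin 2)) (j : Fin 2) : ‖x j‖ ≤ ‖x‖ := by
  rw [euclid_norm_eq]
  have h0 := norm_nonneg (x 0); have h1 := norm_nonneg (x 1)
  have hj : ‖x j‖^2 ≤ ‖x 0‖^2 + ‖x 1‖^2 := by
    fin_cases j <;> beta_reduce <;> simp only [Fin.zero_eta, Fin.mk_one] <;>
      nlinarith [norm_nonneg (x 0), norm_nonneg (x 1), sq_nonneg ‖x 0‖, sq_nonneg ‖x 1‖]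
  calc ‖x j‖ = Real.sqrt (‖x j‖^2) := (Real.sqrt_sq (norm_nonneg _)).symm
  _ ≤ _ := Real.sqrt_le_sqrt hj

lemma matOpNorm_le_sum (M : Matrix (Fin 2) (Fin 2) ℂ) :
    matOpNorm M ≤ ‖M 0 0‖ + ‖M 0 1‖ + ‖M 1 0‖ + ‖M 1 1‖ := by
  refine ContinuousLinearMap.opNorm_le_bound _ (by positivity) (fun x => ?_)
  have key : ∀ i : Fin 2, ‖(Matrix.toEuclideanCLM (𝕜 := ℂ) M x) i‖ ≤ ‖M i 0‖ * ‖x‖ + ‖M i 1‖ * ‖x‖ := by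
    intro i
    have : (Matrix.toEuclideanCLM (𝕜 := ℂ) M x) i = M i 0 * x 0 + M i 1 * x 1 := by
      show (M.mulVec x) i = _
      simp [Matrix.mulVec, dotProduct, Fin.sum_univ_two]
    rw [this]
    calc ‖M i 0 * x 0 + M i 1 * x 1‖ ≤ ‖M i 0 * x 0‖ + ‖M i 1 * x 1‖ := norm_add_le _ _
    _ ≤ ‖M i 0‖ * ‖x‖ + ‖M i 1‖ * ‖x‖ := by
        rw [norm_mul, norm_mul]
        gcongr <;> exact coord_le x _
  set y := Matrix.toEuclideanCLM (𝕜 := ℂ) M x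
  have hy : ‖y‖ ≤ ‖y 0‖ + ‖y 1‖ := by
    rw [euclid_norm_eq]
    have h0 := norm_nonneg (y 0); have h1 := norm_nonneg (y 1)
    rw [show ‖y 0‖ + ‖y 1‖ = Real.sqrt ((‖y 0‖ + ‖y 1‖)^2) from (Real.sqrt_sq (by positivity)).symm]
    exact Real.sqrt_le_sqrt (by nlinarith)
  calc ‖y‖ ≤ ‖y 0‖ + ‖y 1‖ := hy
  _ ≤ (‖M 0 0‖ * ‖x‖ + ‖M 0 1‖ * ‖x‖) + (‖M 1 0‖ * ‖x‖ + ‖M 1 1‖ * ‖x‖) :=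
      add_le_add (key 0) (key 1)
  _ = (‖M 0 0‖ + ‖M 0 1‖ + ‖M 1 0‖ + ‖M 1 1‖) * ‖x‖ := by ring

lemma normSq_exp_sub_one (t : ℝ) :
    Complex.abs (Complex.exp (t * I) - 1) ^ 2 = 2 - 2 * Real.cos t := by
  rw [Complex.sq_abs, Complex.normSq_apply]
  simp [Complex.exp_ofReal_mul_I_re, Complex.exp_ofReal_mul_I_im]
  nlinarith [Real.sin_sq_add_cos_sq t]

lemma exp_sub_one_le (t : ℝ) : Complex.abs (Complex.exp (t * I) - 1) ≤ |t| := by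
  have h := normSq_exp_sub_one t
  have h2 : Real.cos t ≥ 1 - t^2/2 := Real.one_sub_sq_div_two_le_cos
  have h3 : Complex.abs (Complex.exp (t * I) - 1) ^ 2 ≤ t^2 := by
    rw [h]; nlinarith
  calc Complex.abs (Complex.exp (t * I) - 1)
      = Real.sqrt (Complex.abs (Complex.exp (t * I) - 1)^2) :=
        (Real.sqrt_sq (AbsoluteValue.nonneg _ _)).symm
  _ ≤ Real.sqrt (t^2) := Real.sqrt_le_sqrt h3
  _ = |t| := Real.sqrt_sq_eq_abs t

lemma exp_taylor_bound (t : ℝ) :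
    Complex.abs (Complex.exp (t * I) - 1 - t * I) ≤ 3 * t ^ 2 := by
  rcases le_or_gt |t| 1 with h | h
  · have hz : Complex.abs ((t : ℂ) * I) ≤ 1 := by
      rwa [map_mul, Complex.abs_I, mul_one, Complex.abs_ofReal]
    have := Complex.abs_exp_sub_one_sub_id_le hz
    calc Complex.abs (Complex.exp (t * I) - 1 - t * I) ≤ Complex.abs ((t:ℂ)*I) ^ 2 := this
    _ = t^2 := by rw [map_mul, Complex.abs_I, mul_one, Complex.abs_ofReal, _root_.sq_abs]
    _ ≤ 3 * t^2 := by nlinarith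
  · have h1 : Complex.abs (Complex.exp (t * I) - 1) ≤ |t| := exp_sub_one_le t
    have h2 : Complex.abs ((t:ℂ) * I) = |t| := by
      rw [map_mul, Complex.abs_I, mul_one, Complex.abs_ofReal]
    calc Complex.abs (Complex.exp (t * I) - 1 - t * I)
        ≤ Complex.abs (Complex.exp (t * I) - 1) + Complex.abs ((t:ℂ) * I) :=
          (AbsoluteValue.sub_le_add _ _ _)
    _ ≤ |t| + |t| := by rw [h2]; linarith
    _ ≤ 3 * t^2 := by nlinarith [_root_.sq_abs t, abs_nonneg t]

lemma exp_sub_one_lower (t : ℝ) (ht : |t| ≤ 3 * π / 2) :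
    8 * t^2 ≤ 9 * π^2 * Complex.abs (Complex.exp (t * I) - 1) ^ 2 := by
  rw [normSq_exp_sub_one]
  have hpi := Real.pi_gt_three
  rcases le_or_gt |t| π with h | h
  · have hcos := Real.cos_le_one_sub_mul_cos_sq h
    have ht2 : t^2 ≤ π^2 := by nlinarith [_root_.sq_abs t, abs_nonneg t]
    have key : π^2 * Real.cos t ≤ π^2 - 2 * t^2 := by
      have h2 := mul_le_mul_of_nonneg_left hcos (le_of_lt (by positivity : (0:ℝ) < π^2))
      have : π^2 * (2 / π ^ 2 * t ^ 2) = 2 * t^2 := by field_simp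
      nlinarith
    nlinarith
  · have hc : Real.cos t ≤ 0 := by
      rw [← Real.cos_abs]
      apply Real.cos_nonpos_of_pi_div_two_le_of_le
      · linarith
      · linarith
    have ht2 : t^2 ≤ (3*π/2)^2 := by nlinarith [_root_.sq_abs t, abs_nonneg t]
    nlinarith [sq_nonneg π]

lemma inv_neg_sub (a b : ℝ) (ha : a ≠ 0) (hb : b ≠ 0) :
    (-a)⁻¹ - (-b)⁻¹ = (a - b)/(a*b) := by
  rw [inv_neg, inv_neg, eq_div_iff (mul_ne_zero ha hb)]
  field_simp
  ring

lemma div_form (a b x y : ℂ) (ha : a ≠ 0) (hb : b ≠ 0) :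
    a⁻¹ * (-x) - b⁻¹ * (-y) = (y*a - x*b)/(a*b) := by field_simp; ring

end helpers

set_option maxHeartbeats 2000000 in
theorem resolvent_diff_bound_1D_fb (m : ℝ) (hm : 0 ≤ m) :
    ∃ C > 0, ∀ h : ℝ, 0 < h → h ≤ 1 → ∀ ξ : ℝ,
      h * ξ ∈ Set.Icc (-(3 * Real.pi / 2)) (3 * Real.pi / 2) →
      matOpNorm ((G0 m ξ - Complex.I • (1 : Matrix (Fin 2) (Fin 2) ℂ))⁻¹
          - (G0fb h m ξ - Complex.I • (1 : Matrix (Fin 2) (Fin 2) ℂ))⁻¹)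
        ≤ C * h := by
  have hπ : (0:ℝ) < π := Real.pi_pos
  refine ⟨81 * π^2 / 4, by positivity, ?_⟩
  intro h hh hh1 ξ hξmem
  obtain ⟨hξ1, hξ2⟩ := hξmem
  have hhne : (h:ℂ) ≠ 0 := by exact_mod_cast hh.ne'
  have hIh : Complex.I * (h:ℂ) ≠ 0 := mul_ne_zero Complex.I_ne_zero hhne
  set t : ℝ := h * ξ with htdef
  have habs_t : |t| ≤ 3 * π / 2 := abs_le.mpr ⟨by linarith, by linarith⟩
  -- the symbols
  set u : ℂ := (1 / (Complex.I * h)) * (Complex.exp (Complex.I * h * ξ) - 1) with hudef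
  set v : ℂ := -(1 / (Complex.I * h)) * (Complex.exp (-(Complex.I) * h * ξ) - 1) with hvdef
  set r : ℝ := Complex.abs u with hrdef
  have hr0 : 0 ≤ r := AbsoluteValue.nonneg _ _
  -- v = conj u
  have hv : v = (starRingEnd ℂ) u := by
    rw [hudef, hvdef, map_mul, map_sub, ← Complex.exp_conj]
    simp [map_mul, Complex.conj_I, Complex.conj_ofReal, div_eq_mul_inv]
  have hvu : v * u = ((r^2 : ℝ) : ℂ) := by
    rw [hv, mul_comm, Complex.mul_conj, hrdef, Complex.normSq_eq_abs]
  have hvu' : v * u = ((r:ℂ))^2 := by rw [hvu]; push_cast; ring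
  -- u as a nicer quotient
  have harg : Complex.I * (h:ℂ) * (ξ:ℂ) = ((t:ℝ):ℂ) * Complex.I := by
    rw [htdef]; push_cast; ring
  have hu2 : u = (Complex.exp ((t:ℂ) * Complex.I) - 1) / (Complex.I * h) := by
    rw [hudef, harg]; ring
  -- F1 : abs (u - ξ) ≤ 3 h ξ²
  have F1 : Complex.abs (u - (ξ:ℂ)) ≤ 3 * h * ξ^2 := by
    have hsplit : u - (ξ:ℂ) = (Complex.exp ((t:ℂ) * Complex.I) - 1 - (t:ℂ) * Complex.I) / (Complex.I * h) := by
      rw [hu2, htdef]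
      push_cast
      field_simp
    rw [hsplit, map_div₀, map_mul, Complex.abs_I, one_mul, Complex.abs_ofReal,
        abs_of_pos hh]
    rw [div_le_iff₀ hh]
    calc Complex.abs (Complex.exp ((t:ℂ) * Complex.I) - 1 - (t:ℂ) * Complex.I)
        ≤ 3 * t ^ 2 := exp_taylor_bound t
    _ = 3 * h * ξ^2 * h := by rw [htdef]; ring
  -- F2 : r ≤ |ξ|
  have F2 : r ≤ |ξ| := by
    rw [hrdef, hu2, map_div₀, map_mul, Complex.abs_I, one_mul, Complex.abs_ofReal,
        abs_of_pos hh, div_le_iff₀ hh]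
    calc Complex.abs (Complex.exp ((t:ℂ) * Complex.I) - 1) ≤ |t| := exp_sub_one_le t
    _ = |ξ| * h := by rw [htdef, abs_mul, abs_of_pos hh]; ring
  -- F3 : 8 ξ² ≤ 9 π² r²
  have F3 : 8 * ξ^2 ≤ 9 * π^2 * r^2 := by
    have hl := exp_sub_one_lower t habs_t
    have habsu : Complex.abs (Complex.exp ((t:ℂ) * Complex.I) - 1) = r * h := by
      rw [hrdef, hu2, map_div₀, map_mul, Complex.abs_I, one_mul, Complex.abs_ofReal,
          abs_of_pos hh]
      field_simp
    rw [habsu, htdef] at hl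
    have hh2 : (0:ℝ) < h^2 := by positivity
    nlinarith [sq_nonneg r, sq_nonneg ξ, sq_nonneg (r*h), mul_pos hh hh]
  -- matrices
  set P : ℝ := 1 + m^2 + ξ^2 with hPdef
  set Q : ℝ := 1 + m^2 + r^2 with hQdef
  have hP0 : (0:ℝ) < P := by rw [hPdef]; positivity
  have hQ0 : (0:ℝ) < Q := by rw [hQdef]; positivity
  have hA : G0 m ξ - Complex.I • (1 : Matrix (Fin 2) (Fin 2) ℂ)
      = !![(m:ℂ) - Complex.I, (ξ:ℂ); (ξ:ℂ), -(m:ℂ) - Complex.I] := by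
    ext i j
    fin_cases i <;> fin_cases j <;>
      simp [G0, Matrix.smul_apply, Matrix.one_apply] <;> ring
  have hB : G0fb h m ξ - Complex.I • (1 : Matrix (Fin 2) (Fin 2) ℂ)
      = !![(m:ℂ) - Complex.I, v; u, -(m:ℂ) - Complex.I] := by
    ext i j
    fin_cases i <;> fin_cases j <;>
      simp [G0fb, Matrix.smul_apply, Matrix.one_apply, hudef, hvdef] <;> ring
  have hdetA : (!![(m:ℂ) - Complex.I, (ξ:ℂ); (ξ:ℂ), -(m:ℂ) - Complex.I]).det = ((-P : ℝ) : ℂ) := by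
    rw [Matrix.det_fin_two_of, hPdef]
    push_cast
    linear_combination Complex.I_sq
  have hdetB : (!![(m:ℂ) - Complex.I, v; u, -(m:ℂ) - Complex.I]).det = ((-Q : ℝ) : ℂ) := by
    rw [Matrix.det_fin_two_of, hQdef]
    push_cast
    linear_combination Complex.I_sq - hvu'
  have hAinv : (!![(m:ℂ) - Complex.I, (ξ:ℂ); (ξ:ℂ), -(m:ℂ) - Complex.I])⁻¹
      = ((-P:ℝ):ℂ)⁻¹ • !![-(m:ℂ) - Complex.I, -(ξ:ℂ); -(ξ:ℂ), (m:ℂ) - Complex.I] := by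
    rw [Matrix.inv_def, Matrix.adjugate_fin_two_of, hdetA, Ring.inverse_eq_inv']
  have hBinv : (!![(m:ℂ) - Complex.I, v; u, -(m:ℂ) - Complex.I])⁻¹
      = ((-Q:ℝ):ℂ)⁻¹ • !![-(m:ℂ) - Complex.I, -v; -u, (m:ℂ) - Complex.I] := by
    rw [Matrix.inv_def, Matrix.adjugate_fin_two_of, hdetB, Ring.inverse_eq_inv']
  set D := (G0 m ξ - Complex.I • (1 : Matrix (Fin 2) (Fin 2) ℂ))⁻¹
      - (G0fb h m ξ - Complex.I • (1 : Matrix (Fin 2) (Fin 2) ℂ))⁻¹ with hDdef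
  have hD : D = ((-P:ℝ):ℂ)⁻¹ • !![-(m:ℂ) - Complex.I, -(ξ:ℂ); -(ξ:ℂ), (m:ℂ) - Complex.I]
      - ((-Q:ℝ):ℂ)⁻¹ • !![-(m:ℂ) - Complex.I, -v; -u, (m:ℂ) - Complex.I] := by
    rw [hDdef, hA, hB, hAinv, hBinv]
  -- entries
  have hD00 : D 0 0 = (-(m:ℂ) - Complex.I) * (((-P:ℝ):ℂ)⁻¹ - ((-Q:ℝ):ℂ)⁻¹) := by
    rw [hD]; simp [Matrix.smul_apply]; ring
  have hD11 : D 1 1 = ((m:ℂ) - Complex.I) * (((-P:ℝ):ℂ)⁻¹ - ((-Q:ℝ):ℂ)⁻¹) := by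
    rw [hD]; simp [Matrix.smul_apply]; ring
  have hD01 : D 0 1 = ((-P:ℝ):ℂ)⁻¹ * (-(ξ:ℂ)) - ((-Q:ℝ):ℂ)⁻¹ * (-v) := by
    rw [hD]; simp [Matrix.smul_apply]
  have hD10 : D 1 0 = ((-P:ℝ):ℂ)⁻¹ * (-(ξ:ℂ)) - ((-Q:ℝ):ℂ)⁻¹ * (-u) := by
    rw [hD]; simp [Matrix.smul_apply]
  have hPne : P ≠ 0 := hP0.ne'
  have hQne : Q ≠ 0 := hQ0.ne'
  have hPCne : ((-P:ℝ):ℂ) ≠ 0 := by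
    simpa using (show ((P:ℝ):ℂ) ≠ 0 by exact_mod_cast hPne)
  have hQCne : ((-Q:ℝ):ℂ) ≠ 0 := by
    simpa using (show ((Q:ℝ):ℂ) ≠ 0 by exact_mod_cast hQne)
  -- |ξ² - r²| bound
  have habsdiff : |ξ^2 - r^2| ≤ 2 * |ξ| * (3 * h * ξ^2) := by
    have h1 : |Complex.abs ((ξ:ℂ)) - Complex.abs u| ≤ Complex.abs ((ξ:ℂ) - u) :=
      Complex.abs.abs_abv_sub_le_abv_sub _ _
    rw [Complex.abs_ofReal, AbsoluteValue.map_sub] at h1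
    have h1' : |(|ξ| - r)| ≤ 3 * h * ξ^2 := le_trans h1 F1
    have h2 : |ξ| - r ≤ 3 * h * ξ^2 := le_trans (le_abs_self _) h1'
    have heq : |ξ^2 - r^2| = ξ^2 - r^2 := abs_of_nonneg (by nlinarith [_root_.sq_abs ξ])
    nlinarith [_root_.sq_abs ξ, abs_nonneg ξ]
  have hPm : (m + 1) * |ξ| ≤ P := by
    rw [hPdef]
    nlinarith [sq_nonneg (m + 1 - |ξ|), sq_nonneg (m - 1), _root_.sq_abs ξ]
  -- diagonal entries
  have hinvdiff : ((-P:ℝ):ℂ)⁻¹ - ((-Q:ℝ):ℂ)⁻¹ = (((ξ^2 - r^2)/(P*Q) : ℝ) : ℂ) := by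
    have hd : ξ^2 - r^2 = P - Q := by rw [hPdef, hQdef]; ring
    have hinv_real : (-P)⁻¹ - (-Q)⁻¹ = (ξ^2 - r^2)/(P*Q) := by
      rw [hd]; exact inv_neg_sub P Q hPne hQne
    rw [← hinv_real]
    push_cast
    ring
  have hdiag : ∀ z : ℂ, Complex.abs z ≤ m + 1 →
      Complex.abs (z * (((-P:ℝ):ℂ)⁻¹ - ((-Q:ℝ):ℂ)⁻¹)) ≤ 6 * h * ξ^2 / Q := by
    intro z hz
    rw [hinvdiff, map_mul, Complex.abs_ofReal]
    have hstep : (m+1) * |ξ^2 - r^2| ≤ 6*h*ξ^2*P := by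
      nlinarith [mul_le_mul_of_nonneg_left habsdiff (show (0:ℝ) ≤ m+1 by linarith),
        mul_le_mul_of_nonneg_right hPm (show (0:ℝ) ≤ 6*h*ξ^2 by positivity)]
    have h3 : Complex.abs z * |(ξ^2 - r^2)/(P*Q)| ≤ (m+1) * (|ξ^2-r^2|/(P*Q)) := by
      rw [abs_div, abs_of_pos (mul_pos hP0 hQ0)]
      have := AbsoluteValue.nonneg Complex.abs z
      gcongr
    refine le_trans h3 ?_
    rw [← mul_div_assoc, div_le_div_iff₀ (mul_pos hP0 hQ0) hQ0]
    nlinarith [mul_le_mul_of_nonneg_right hstep hQ0.le]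
  have hmI1 : Complex.abs (-(m:ℂ) - Complex.I) ≤ m + 1 := by
    calc Complex.abs (-(m:ℂ) - Complex.I)
        ≤ Complex.abs (-(m:ℂ)) + Complex.abs Complex.I := AbsoluteValue.sub_le_add _ _ _
    _ = m + 1 := by rw [map_neg_eq_map, Complex.abs_ofReal, Complex.abs_I, _root_.abs_of_nonneg hm]
  have hmI2 : Complex.abs ((m:ℂ) - Complex.I) ≤ m + 1 := by
    calc Complex.abs ((m:ℂ) - Complex.I)
        ≤ Complex.abs ((m:ℂ)) + Complex.abs Complex.I := AbsoluteValue.sub_le_add _ _ _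
    _ = m + 1 := by rw [Complex.abs_ofReal, Complex.abs_I, _root_.abs_of_nonneg hm]
  have hB00 : ‖D 0 0‖ ≤ 6 * h * ξ^2 / Q := by
    rw [Complex.norm_eq_abs, hD00]; exact hdiag _ hmI1
  have hB11 : ‖D 1 1‖ ≤ 6 * h * ξ^2 / Q := by
    rw [Complex.norm_eq_abs, hD11]; exact hdiag _ hmI2
  -- off-diagonal
  have habs_xiv : Complex.abs ((ξ:ℂ) - v) ≤ 3 * h * ξ^2 := by
    rw [hv, show (ξ:ℂ) - (starRingEnd ℂ) u = (starRingEnd ℂ) ((ξ:ℂ) - u) by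
      rw [map_sub, Complex.conj_ofReal], Complex.abs_conj, AbsoluteValue.map_sub]
    exact F1
  have habs_v : Complex.abs v = r := by rw [hv, Complex.abs_conj, hrdef]
  have habsP : Complex.abs ((-P:ℝ):ℂ) = P := by
    rw [Complex.abs_ofReal, abs_neg, abs_of_pos hP0]
  have habsQ : Complex.abs ((-Q:ℝ):ℂ) = Q := by
    rw [Complex.abs_ofReal, abs_neg, abs_of_pos hQ0]
  have hoff : ∀ W : ℂ, Complex.abs W ≤ 3*h*ξ^2*P →
      Complex.abs (W / (((-P:ℝ):ℂ) * ((-Q:ℝ):ℂ))) ≤ 3 * h * ξ^2 / Q := by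
    intro W hW
    rw [map_div₀, map_mul, habsP, habsQ, div_le_div_iff₀ (mul_pos hP0 hQ0) hQ0]
    nlinarith [mul_le_mul_of_nonneg_right hW hQ0.le]
  have hE01 : D 0 1 = (v * ((-P:ℝ):ℂ) - (ξ:ℂ) * ((-Q:ℝ):ℂ)) / (((-P:ℝ):ℂ) * ((-Q:ℝ):ℂ)) := by
    rw [hD01]; exact div_form _ _ _ _ hPCne hQCne
  have hE10 : D 1 0 = (u * ((-P:ℝ):ℂ) - (ξ:ℂ) * ((-Q:ℝ):ℂ)) / (((-P:ℝ):ℂ) * ((-Q:ℝ):ℂ)) := by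
    rw [hD10]; exact div_form _ _ _ _ hPCne hQCne
  have hW01 : v * ((-P:ℝ):ℂ) - (ξ:ℂ) * ((-Q:ℝ):ℂ)
      = ((1 + m^2 : ℝ):ℂ) * ((ξ:ℂ) - v) + v * (ξ:ℂ) * (u - (ξ:ℂ)) := by
    rw [hPdef, hQdef]
    push_cast
    linear_combination -(ξ:ℂ) * hvu'
  have hW10 : u * ((-P:ℝ):ℂ) - (ξ:ℂ) * ((-Q:ℝ):ℂ)
      = ((1 + m^2 : ℝ):ℂ) * ((ξ:ℂ) - u) + u * (ξ:ℂ) * (v - (ξ:ℂ)) := by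
    rw [hPdef, hQdef]
    push_cast
    linear_combination -(ξ:ℂ) * hvu'
  have habs_u : Complex.abs u = r := hrdef.symm
  have habs_ux : Complex.abs ((ξ:ℂ) - u) ≤ 3 * h * ξ^2 := by
    rw [AbsoluteValue.map_sub]; exact F1
  have habs_vx : Complex.abs (v - (ξ:ℂ)) ≤ 3 * h * ξ^2 := by
    rw [AbsoluteValue.map_sub]; exact habs_xiv
  have hWbound : ∀ z w : ℂ, Complex.abs z = r → Complex.abs w ≤ 3*h*ξ^2 →
      Complex.abs (((1 + m^2 : ℝ):ℂ) * ((ξ:ℂ) - z) + z * (ξ:ℂ) * w) ≤ 3*h*ξ^2*P → True := fun _ _ _ _ _ => trivial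
  have hNum : ∀ z y w : ℂ, Complex.abs z = r → Complex.abs y ≤ 3*h*ξ^2 → Complex.abs w ≤ 3*h*ξ^2 →
      Complex.abs (((1 + m^2 : ℝ):ℂ) * y + z * (ξ:ℂ) * w) ≤ 3*h*ξ^2*P := by
    intro z y w hz hy hw
    calc Complex.abs (((1 + m^2 : ℝ):ℂ) * y + z * (ξ:ℂ) * w)
        ≤ Complex.abs (((1 + m^2 : ℝ):ℂ) * y) + Complex.abs (z * (ξ:ℂ) * w) :=
          AbsoluteValue.add_le _ _ _
    _ = |1 + m^2| * Complex.abs y + r * |ξ| * Complex.abs w := by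
        rw [map_mul, map_mul, map_mul, Complex.abs_ofReal, Complex.abs_ofReal, hz]
    _ ≤ (1 + m^2) * (3*h*ξ^2) + |ξ| * |ξ| * (3*h*ξ^2) := by
        rw [abs_of_pos (show (0:ℝ) < 1 + m^2 by positivity)]
        gcongr
    _ = 3*h*ξ^2*(1 + m^2 + |ξ| * |ξ|) := by ring
    _ = 3*h*ξ^2*P := by rw [hPdef, ← _root_.sq_abs ξ]; ring_nf
  have hB01 : ‖D 0 1‖ ≤ 3 * h * ξ^2 / Q := by
    rw [Complex.norm_eq_abs, hE01]
    exact hoff _ (hW01 ▸ hNum v ((ξ:ℂ) - v) (u - (ξ:ℂ)) habs_v habs_xiv F1)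
  have hB10 : ‖D 1 0‖ ≤ 3 * h * ξ^2 / Q := by
    rw [Complex.norm_eq_abs, hE10]
    exact hoff _ (hW10 ▸ hNum u ((ξ:ℂ) - u) (v - (ξ:ℂ)) habs_u habs_ux habs_vx)
  -- assemble
  have hr2Q : r^2 ≤ Q := by rw [hQdef]; nlinarith [sq_nonneg m]
  have hfinal : 18 * h * ξ^2 / Q ≤ 81 * π^2 / 4 * h := by
    rw [div_le_iff₀ hQ0]
    nlinarith [mul_le_mul_of_nonneg_left F3 hh.le,
      mul_le_mul_of_nonneg_left hr2Q (show (0:ℝ) ≤ 9*π^2*h by positivity)]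
  calc matOpNorm D ≤ ‖D 0 0‖ + ‖D 0 1‖ + ‖D 1 0‖ + ‖D 1 1‖ := matOpNorm_le_sum D
  _ ≤ 6*h*ξ^2/Q + 3*h*ξ^2/Q + 3*h*ξ^2/Q + 6*h*ξ^2/Q := by
      gcongr <;> assumption
  _ = 18 * h * ξ^2 / Q := by ring
  _ ≤ 81 * π^2 / 4 * h := hfinal
end

section
/- For each fixed m ≥ 0 there exists c > 0 such that for all h ∈ (0,1], the maximum over ξ ∈ [-π/h, π/h] of the operator norm of (G₀ₕᶠᵇ(ξ) - iI)⁻¹ - (G₀ₕˢ(ξ) - iI)⁻¹ is at least c. In fact one may take c = 2((1+m²)² + 4(1+m²))^{-1/2}. -/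
set_option maxHeartbeats 1000000

noncomputable def G0s (h m ξ : ℝ) : Matrix (Fin 2) (Fin 2) ℂ :=
  !![(m : ℂ), ((Real.sin (h * ξ) / h : ℝ) : ℂ);
     ((Real.sin (h * ξ) / h : ℝ) : ℂ), (-m : ℂ)]

lemma matOpNorm_col (A : Matrix (Fin 2) (Fin 2) ℂ) :
    Real.sqrt (‖A 0 0‖^2 + ‖A 1 0‖^2) ≤ matOpNorm A := by
  set x : EuclideanSpace ℂ (Fin 2) := (WithLp.equiv 2 (Fin 2 → ℂ)).symm ![1, 0] with hxdef
  have hx : ‖x‖ = 1 := by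
    simp [hxdef, EuclideanSpace.norm_eq, Fin.sum_univ_two]
  have h1 : Matrix.toEuclideanCLM (𝕜 := ℂ) A x
      = (WithLp.equiv 2 (Fin 2 → ℂ)).symm (A.mulVec ![1, 0]) := by
    rw [hxdef, WithLp.equiv_symm_apply]
    simp [Matrix.toLin'_apply]
  have h2 : ‖Matrix.toEuclideanCLM (𝕜 := ℂ) A x‖
      = Real.sqrt (‖A 0 0‖^2 + ‖A 1 0‖^2) := by
    rw [h1]
    simp [EuclideanSpace.norm_eq, Fin.sum_univ_two, Matrix.mulVec, dotProduct]
  calc Real.sqrt (‖A 0 0‖^2 + ‖A 1 0‖^2) = ‖Matrix.toEuclideanCLM (𝕜 := ℂ) A x‖ := h2.symm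
    _ ≤ matOpNorm A * ‖x‖ := ContinuousLinearMap.le_opNorm _ _
    _ = matOpNorm A := by rw [hx, mul_one]

theorem fb_symmetric_nonconvergence_1D (m : ℝ) (hm : 0 ≤ m) :
    ∃ c : ℝ, c = 2 / Real.sqrt ((1 + m ^ 2) ^ 2 + 4 * (1 + m ^ 2)) ∧ 0 < c ∧
      ∀ h : ℝ, 0 < h → h ≤ 1 →
        ∃ ξ ∈ Set.Icc (-(Real.pi / h)) (Real.pi / h),
          c ≤ matOpNorm ((G0fb h m ξ - Complex.I • (1 : Matrix (Fin 2) (Fin 2) ℂ))⁻¹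
              - (G0s h m ξ - Complex.I • (1 : Matrix (Fin 2) (Fin 2) ℂ))⁻¹) := by
  have hMpos : (0:ℝ) < 1 + m^2 := by positivity
  have hArg : (0:ℝ) < (1 + m ^ 2) ^ 2 + 4 * (1 + m ^ 2) := by positivity
  refine ⟨_, rfl, by positivity, ?_⟩
  intro h h0 h1
  have hπ : 0 ≤ Real.pi / h := div_nonneg Real.pi_pos.le h0.le
  refine ⟨Real.pi/h, ⟨by linarith, le_refl _⟩, ?_⟩
  have hne : (h:ℂ) ≠ 0 := by exact_mod_cast h0.ne'
  have hmI : (m:ℂ) - Complex.I ≠ 0 := by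
    intro hc
    have := congrArg Complex.im hc
    simp at this
  have hmI' : -(m:ℂ) - Complex.I ≠ 0 := by
    intro hc
    have := congrArg Complex.im hc
    simp at this
  -- the real determinant and other real constants
  obtain ⟨dA, hdAdef⟩ : ∃ dA : ℝ, dA = -((1 + m^2) + 4/h^2) := ⟨_, rfl⟩
  have hdAneg : dA < 0 := by
    rw [hdAdef]
    have : (0:ℝ) < 4/h^2 := by positivity
    linarith
  have hdAC : (dA:ℂ) ≠ 0 := by exact_mod_cast hdAneg.ne
  obtain ⟨r, hrdef⟩ : ∃ r : ℝ, r = -1/dA - 1/(1 + m^2) := ⟨_, rfl⟩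
  obtain ⟨s, hsdef⟩ : ∃ s : ℝ, s = -2/(h * dA) := ⟨_, rfl⟩
  -- the simplified matrices
  have e2 : Complex.exp (Complex.I * h * ((Real.pi/h : ℝ):ℂ)) = -1 := by
    have e1 : (h:ℂ) * ((Real.pi/h : ℝ):ℂ) = (Real.pi:ℂ) := by push_cast; field_simp
    rw [mul_assoc, e1, mul_comm, Complex.exp_pi_mul_I]
  have e3 : Complex.exp (-(Complex.I) * h * ((Real.pi/h : ℝ):ℂ)) = -1 := by
    have h4 : -(Complex.I) * h * ((Real.pi/h : ℝ):ℂ) = -(Complex.I * h * ((Real.pi/h : ℝ):ℂ)) := by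
      ring
    rw [h4, Complex.exp_neg, e2]; norm_num
  have hA : G0fb h m (Real.pi/h) - Complex.I • (1 : Matrix (Fin 2) (Fin 2) ℂ)
      = !![(m:ℂ) - Complex.I, -2*Complex.I/h;
           2*Complex.I/h, -(m:ℂ) - Complex.I] := by
    rw [G0fb, e2, e3]
    ext i j
    fin_cases i <;> fin_cases j <;> simp [Matrix.one_apply]
    all_goals (field_simp; ring)
  have hB : G0s h m (Real.pi/h) - Complex.I • (1 : Matrix (Fin 2) (Fin 2) ℂ)
      = !![(m:ℂ) - Complex.I, 0; 0, -(m:ℂ) - Complex.I] := by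
    have hs0 : Real.sin (h * (Real.pi/h)) = 0 := by
      rw [mul_div_cancel₀ _ h0.ne', Real.sin_pi]
    ext i j
    fin_cases i <;> fin_cases j <;> simp [G0s, hs0, Matrix.one_apply]
  -- inverses
  have hAi : (G0fb h m (Real.pi/h) - Complex.I • (1 : Matrix (Fin 2) (Fin 2) ℂ))⁻¹
      = !![(-(m:ℂ) - Complex.I)/(dA:ℂ), (2*Complex.I/h)/(dA:ℂ);
           (-2*Complex.I/h)/(dA:ℂ), ((m:ℂ) - Complex.I)/(dA:ℂ)] := by
    rw [hA]
    apply Matrix.inv_eq_right_inv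
    ext i j
    fin_cases i <;> fin_cases j <;>
      simp [Matrix.mul_apply, Fin.sum_univ_two, Matrix.one_apply]
    all_goals
      have hdAh : (dA:ℂ) * (h:ℂ)^2 = -((h:ℂ)^2*(1+(m:ℂ)^2) + 4) := by
        rw [hdAdef]; push_cast; field_simp
      field_simp
      try ring
      try linear_combination ((4:ℂ) + (h:ℂ)^2) * Complex.I_sq - hdAh
  have hBi : (G0s h m (Real.pi/h) - Complex.I • (1 : Matrix (Fin 2) (Fin 2) ℂ))⁻¹
      = !![((m:ℂ) + Complex.I)/((1:ℂ) + m^2), 0;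
           0, (-(m:ℂ) + Complex.I)/((1:ℂ) + m^2)] := by
    rw [hB]
    apply Matrix.inv_eq_right_inv
    have hM1 : ((1:ℂ) + m^2) ≠ 0 := by
      exact_mod_cast (show ((1 + m^2 : ℝ):ℂ) ≠ 0 by exact_mod_cast hMpos.ne')
    ext i j
    fin_cases i <;> fin_cases j <;>
      simp [Matrix.mul_apply, Fin.sum_univ_two, Matrix.one_apply]
    all_goals (field_simp; ring_nf; simp [Complex.I_sq]; try ring)
  -- final computation
  have hM1 : ((1:ℂ) + (m:ℂ)^2) ≠ 0 := by
    exact_mod_cast (show ((1 + m^2 : ℝ):ℂ) ≠ 0 by exact_mod_cast hMpos.ne')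
  obtain ⟨t, htdef⟩ : ∃ t : ℝ, t = h^2*(1+m^2) + 4 := ⟨_, rfl⟩
  have htpos : 0 < t := by rw [htdef]; positivity
  obtain ⟨b, hb⟩ : ∃ b : ℝ, b = -4/(t*(1+m^2)) := ⟨_, rfl⟩
  obtain ⟨s', hs'⟩ : ∃ s' : ℝ, s' = 2*h/t := ⟨_, rfl⟩
  have htC : ((t:ℝ):ℂ) ≠ 0 := by exact_mod_cast htpos.ne'
  have hdAt : (dA:ℂ) * (h:ℂ)^2 = -((t:ℝ):ℂ) := by
    rw [hdAdef, htdef]; push_cast; field_simp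
  rw [hAi, hBi]
  refine le_trans ?_ (matOpNorm_col _)
  have E0 : (!![(-(m:ℂ) - Complex.I)/(dA:ℂ), (2*Complex.I/h)/(dA:ℂ);
           (-2*Complex.I/h)/(dA:ℂ), ((m:ℂ) - Complex.I)/(dA:ℂ)]
      - !![((m:ℂ) + Complex.I)/((1:ℂ) + m^2), 0;
           0, (-(m:ℂ) + Complex.I)/((1:ℂ) + m^2)]) 0 0
      = ((m*b : ℝ):ℂ) + ((b:ℝ):ℂ) * Complex.I := by
    norm_num [Matrix.sub_apply]
    have htC2 : ((t:ℝ):ℂ) = (h:ℂ)^2*(1+(m:ℂ)^2)+4 := by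
      rw [htdef]; push_cast; ring
    rw [hb]
    push_cast
    field_simp [hdAC, hM1, htC]
    linear_combination ((m:ℂ)+Complex.I) *
      (-((dA:ℝ):ℂ) * htC2 - (1+(m:ℂ)^2) * hdAt)
  have E1 : (!![(-(m:ℂ) - Complex.I)/(dA:ℂ), (2*Complex.I/h)/(dA:ℂ);
           (-2*Complex.I/h)/(dA:ℂ), ((m:ℂ) - Complex.I)/(dA:ℂ)]
      - !![((m:ℂ) + Complex.I)/((1:ℂ) + m^2), 0;
           0, (-(m:ℂ) + Complex.I)/((1:ℂ) + m^2)]) 1 0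
      = ((s':ℝ):ℂ) * Complex.I := by
    simp only [Matrix.sub_apply]
    norm_num
    rw [hs']
    push_cast
    field_simp [hdAC, htC]
    linear_combination (-1 : ℂ) * hdAt
  rw [E0, E1]
  have n1 : ‖((m*b : ℝ):ℂ) + ((b:ℝ):ℂ) * Complex.I‖^2 = (m*b)^2 + b^2 := by
    rw [Complex.sq_norm, Complex.normSq_add_mul_I]
  have n2 : ‖((s':ℝ):ℂ) * Complex.I‖^2 = s'^2 := by
    rw [norm_mul, Complex.norm_I, mul_one, Complex.norm_real, Real.norm_eq_abs, sq_abs]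
  rw [n1, n2]
  have hsum : (m*b)^2 + b^2 + s'^2 = 4/((1+m^2)*t) := by
    have ht0 : t ≠ 0 := htpos.ne'
    rw [hb, hs', htdef]
    have h20 : (h^2*(1+m^2)+4 : ℝ) ≠ 0 := by positivity
    field_simp
    ring
  have hcpos : 0 < 2 / Real.sqrt ((1+m^2)^2+4*(1+m^2)) := by positivity
  have hfin : (2 / Real.sqrt ((1+m^2)^2+4*(1+m^2)))^2 ≤ (m*b)^2 + b^2 + s'^2 := by
    rw [hsum, div_pow, Real.sq_sqrt hArg.le]
    have h22 : (2:ℝ)^2 = 4 := by norm_num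
    rw [h22]
    rw [div_le_div_iff₀ (by positivity) (by positivity)]
    have ht_le : t ≤ (1+m^2)+4 := by
      rw [htdef]
      nlinarith [mul_nonneg (mul_nonneg (sub_nonneg.mpr h1) (by linarith : (0:ℝ) ≤ 1+h)) hMpos.le]
    nlinarith [htpos, hMpos]
  calc (2 / Real.sqrt ((1+m^2)^2+4*(1+m^2)))
      = Real.sqrt ((2 / Real.sqrt ((1+m^2)^2+4*(1+m^2)))^2) := (Real.sqrt_sq hcpos.le).symm
    _ ≤ Real.sqrt ((m*b)^2 + b^2 + s'^2) := Real.sqrt_le_sqrt hfin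
end

section
/- There exists C > 0 such that for all h > 0 and ξ ∈ ℝ² with hξ ∈ [-3π/2, 3π/2]² and ξ ≠ 0, the operator norm of (G̃₀ₕˢ(ξ) - iI)⁻¹ is at most C/|ξ|. -/
noncomputable def fh (h ξ₁ ξ₂ : ℝ) : ℝ :=
  4 / h * Real.sin (h * ξ₁ / 2) ^ 2 + 4 / h * Real.sin (h * ξ₂ / 2) ^ 2

noncomputable def G0s2 (h m ξ₁ ξ₂ : ℝ) : Matrix (Fin 2) (Fin 2) ℂ :=
  !![(m : ℂ), ((Real.sin (h * ξ₁) / h : ℝ) : ℂ) - Complex.I * ((Real.sin (h * ξ₂) / h : ℝ) : ℂ);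
     ((Real.sin (h * ξ₁) / h : ℝ) : ℂ) + Complex.I * ((Real.sin (h * ξ₂) / h : ℝ) : ℂ), (-m : ℂ)]

noncomputable def G0s2mod (h m ξ₁ ξ₂ : ℝ) : Matrix (Fin 2) (Fin 2) ℂ :=
  G0s2 h m ξ₁ ξ₂ + ((fh h ξ₁ ξ₂ : ℝ) : ℂ) • !![(1 : ℂ), 0; 0, -1]

set_option maxHeartbeats 800000 in
set_option synthInstance.maxHeartbeats 200000 in
open Real in
/-- Core scalar inequality on `|θ| ≤ 3π/2`. -/
lemma core_ineq (θ : ℝ) (hb : |θ| ≤ 3 * π / 2) :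
    16 * θ ^ 2 ≤ 9 * π ^ 2 * (Real.sin θ ^ 2 + 16 * (Real.sin (θ / 2) ^ 2) ^ 2) := by
  have hπ : 0 < π := Real.pi_pos
  rcases le_or_gt |θ| (π / 2) with hx | hx
  · -- Jordan's inequality regime
    have h1 : 2 / π * |θ| ≤ |Real.sin θ| := Real.mul_abs_le_abs_sin hx
    have h2 : 2 * |θ| ≤ |Real.sin θ| * π := by
      rw [div_mul_eq_mul_div, div_le_iff₀ hπ] at h1; linarith
    have h3 : 4 * θ ^ 2 ≤ π ^ 2 * Real.sin θ ^ 2 := by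
      nlinarith [abs_nonneg θ, abs_nonneg (Real.sin θ), sq_abs θ, sq_abs (Real.sin θ)]
    nlinarith [mul_nonneg (sq_nonneg π) (sq_nonneg (Real.sin (θ/2) ^ 2))]
  · -- large frequency regime: cos θ ≤ 0
    have hcos : Real.cos θ ≤ 0 := by
      rw [← Real.cos_abs]
      exact Real.cos_nonpos_of_pi_div_two_le_of_le hx.le (by linarith [abs_le.mp hb])
    have hs : 1 / 2 ≤ Real.sin (θ / 2) ^ 2 := by
      have := Real.sin_sq_eq_half_sub (θ / 2)
      rw [mul_div_cancel₀ θ (two_ne_zero)] at this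
      linarith
    have hθ2 : θ ^ 2 ≤ (3 * π / 2) ^ 2 := by
      have := abs_le.mp hb
      nlinarith [sq_abs θ]
    nlinarith [sq_nonneg (Real.sin θ), mul_nonneg (sq_nonneg π) (sq_nonneg (Real.sin θ)),
      sq_nonneg (Real.sin (θ/2) ^ 2 - 1/2), sq_nonneg π]

set_option maxHeartbeats 800000 in
set_option synthInstance.maxHeartbeats 200000 in
open Real in
lemma coord_ineq (h ξ : ℝ) (hh : 0 < h) (hb : |h * ξ| ≤ 3 * π / 2) :
    16 * ξ ^ 2 ≤ 9 * π ^ 2 *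
      ((Real.sin (h * ξ) / h) ^ 2 + (4 / h * Real.sin (h * ξ / 2) ^ 2) ^ 2) := by
  have hc := core_ineq (h * ξ) hb
  have h2 : (0 : ℝ) < h ^ 2 := by positivity
  have hne : h ≠ 0 := hh.ne'
  calc 16 * ξ ^ 2 = 16 * (h * ξ) ^ 2 / h ^ 2 := by field_simp
    _ ≤ 9 * π ^ 2 * (Real.sin (h * ξ) ^ 2 + 16 * (Real.sin (h * ξ / 2) ^ 2) ^ 2) / h ^ 2 := by
        gcongr
    _ = 9 * π ^ 2 * ((Real.sin (h * ξ) / h) ^ 2 + (4 / h * Real.sin (h * ξ / 2) ^ 2) ^ 2) := by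
        field_simp; ring

set_option maxHeartbeats 1000000 in
set_option synthInstance.maxHeartbeats 400000 in
theorem G0s2mod_resolvent_bound (m : ℝ) (hm : 0 ≤ m) :
    ∃ C > 0, ∀ h : ℝ, 0 < h → ∀ ξ₁ ξ₂ : ℝ,
      h * ξ₁ ∈ Set.Icc (-(3 * Real.pi / 2)) (3 * Real.pi / 2) →
      h * ξ₂ ∈ Set.Icc (-(3 * Real.pi / 2)) (3 * Real.pi / 2) →
      (ξ₁, ξ₂) ≠ (0, 0) →
      matOpNorm ((G0s2mod h m ξ₁ ξ₂
          - Complex.I • (1 : Matrix (Fin 2) (Fin 2) ℂ))⁻¹)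
        ≤ C / Real.sqrt (ξ₁ ^ 2 + ξ₂ ^ 2) := by
  have hπ : 0 < Real.pi := Real.pi_pos
  refine ⟨3 * Real.pi / 4, by positivity, ?_⟩
  intro h hh ξ₁ ξ₂ hb₁ hb₂ hne
  set s₁ : ℝ := Real.sin (h * ξ₁) / h with hs₁
  set s₂ : ℝ := Real.sin (h * ξ₂) / h with hs₂
  set f₁ : ℝ := 4 / h * Real.sin (h * ξ₁ / 2) ^ 2 with hf₁def
  set f₂ : ℝ := 4 / h * Real.sin (h * ξ₂ / 2) ^ 2 with hf₂def
  set a : ℝ := m + (f₁ + f₂) with ha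
  set g : ℝ := a ^ 2 + s₁ ^ 2 + s₂ ^ 2 with hg
  have hg0 : 0 ≤ g := by positivity
  have hg1 : (0 : ℝ) < g + 1 := by linarith
  -- the two matrices
  set Am : Matrix (Fin 2) (Fin 2) ℂ :=
    !![(a : ℂ) - Complex.I, (s₁ : ℂ) - Complex.I * (s₂ : ℂ);
       (s₁ : ℂ) + Complex.I * (s₂ : ℂ), -(a : ℂ) - Complex.I] with hAm
  set Ai : Matrix (Fin 2) (Fin 2) ℂ :=
    !![(a : ℂ) + Complex.I, (s₁ : ℂ) - Complex.I * (s₂ : ℂ);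
       (s₁ : ℂ) + Complex.I * (s₂ : ℂ), -(a : ℂ) + Complex.I] with hAi
  have hBeq : G0s2mod h m ξ₁ ξ₂ - Complex.I • (1 : Matrix (Fin 2) (Fin 2) ℂ) = Am := by
    ext i j
    fin_cases i <;> fin_cases j <;>
      simp [G0s2mod, G0s2, fh, hAm, Matrix.one_apply, ha, hs₁, hs₂, hf₁def, hf₂def] <;>
      push_cast <;> ring
  have hstar : star Ai = Am := by
    ext i j
    fin_cases i <;> fin_cases j <;>
      simp [hAm, hAi, Matrix.star_eq_conjTranspose, Matrix.conjTranspose_apply,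
        Complex.conj_ofReal, map_add, map_sub, map_mul, Complex.conj_I] <;> ring
  have hmul : Am * Ai = (((g + 1 : ℝ) : ℂ)) • (1 : Matrix (Fin 2) (Fin 2) ℂ) := by
    ext i j
    fin_cases i <;> fin_cases j <;>
      simp [hAm, hAi, hg, Matrix.mul_apply, Fin.sum_univ_two, Matrix.one_apply] <;>
      push_cast
    · linear_combination (-(1 : ℂ) - (s₂ : ℂ) ^ 2) * Complex.I_sq
    · ring
    · ring
    · linear_combination (-(1 : ℂ) - (s₂ : ℂ) ^ 2) * Complex.I_sq
  have hcne : ((g + 1 : ℝ) : ℂ) ≠ 0 := by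
    exact_mod_cast Complex.ofReal_ne_zero.mpr hg1.ne'
  have hinv : Am⁻¹ = (((g + 1 : ℝ) : ℂ))⁻¹ • Ai := by
    apply Matrix.inv_eq_right_inv
    rw [Matrix.mul_smul, hmul, smul_smul, inv_mul_cancel₀ hcne, one_smul]
  -- operator norm of Ai
  set T := Matrix.toEuclideanCLM (𝕜 := ℂ) Ai with hT
  have hstT : star T * T = ((g + 1 : ℝ) : ℂ) •
      (1 : EuclideanSpace ℂ (Fin 2) →L[ℂ] EuclideanSpace ℂ (Fin 2)) := by
    have h1 : star T * T = Matrix.toEuclideanCLM (𝕜 := ℂ) (Am * Ai) := by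
      rw [map_mul, ← hstar, hT, ← map_star]
    rw [h1, hmul]
    exact (map_smul _ _ _).trans (by rw [map_one])
  have hT2 : ‖T‖ * ‖T‖ = g + 1 := by
    rw [← CStarRing.norm_star_mul_self, hstT]
    have hn := norm_smul ((g + 1 : ℝ) : ℂ)
      (1 : EuclideanSpace ℂ (Fin 2) →L[ℂ] EuclideanSpace ℂ (Fin 2))
    rw [hn, norm_one, mul_one]
    have habs : ‖((g : ℂ) + 1)‖ = g + 1 := by
      rw [show ((g : ℂ) + 1) = ((g + 1 : ℝ) : ℂ) from by push_cast; ring,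
        Complex.norm_real, Real.norm_eq_abs]
      exact abs_of_pos hg1
    simp [habs]
  have hTnorm : ‖T‖ = Real.sqrt (g + 1) := by
    rw [← hT2, Real.sqrt_mul_self (norm_nonneg T)]
  -- the norm of the inverse
  have hval : matOpNorm ((G0s2mod h m ξ₁ ξ₂
      - Complex.I • (1 : Matrix (Fin 2) (Fin 2) ℂ))⁻¹) = (g + 1)⁻¹ * Real.sqrt (g + 1) := by
    have hXT : Matrix.toEuclideanCLM (𝕜 := ℂ) ((((g + 1 : ℝ) : ℂ))⁻¹ • Ai)
        = (((g + 1 : ℝ) : ℂ))⁻¹ • T := map_smul _ _ _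
    have hn := norm_smul ((((g + 1 : ℝ) : ℂ))⁻¹) T
    rw [hBeq, hinv, matOpNorm, hXT, hn, hTnorm]
    have habs : ‖((g : ℂ) + 1)‖ = g + 1 := by
      rw [show ((g : ℂ) + 1) = ((g + 1 : ℝ) : ℂ) from by push_cast; ring,
        Complex.norm_real, Real.norm_eq_abs]
      exact abs_of_pos hg1
    simp [habs]
  rw [hval]
  -- the quantitative lower bound on g
  have key₁ := coord_ineq h ξ₁ hh (abs_le.mpr ⟨hb₁.1, hb₁.2⟩)
  have key₂ := coord_ineq h ξ₂ hh (abs_le.mpr ⟨hb₂.1, hb₂.2⟩)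
  have hf1 : 0 ≤ f₁ := by rw [hf₁def]; positivity
  have hf2 : 0 ≤ f₂ := by rw [hf₂def]; positivity
  have haf : f₁ ^ 2 + f₂ ^ 2 ≤ a ^ 2 := by
    nlinarith [mul_nonneg hm hf1, mul_nonneg hm hf2, mul_nonneg hf1 hf2, sq_nonneg m]
  have hsum16 : 16 * (ξ₁ ^ 2 + ξ₂ ^ 2) ≤ 9 * Real.pi ^ 2 * g := by
    rw [← hs₁, ← hf₁def] at key₁
    rw [← hs₂, ← hf₂def] at key₂
    nlinarith [sq_nonneg Real.pi]
  have hξpos : 0 < ξ₁ ^ 2 + ξ₂ ^ 2 := by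
    rcases (not_and_or.mp (fun hc : ξ₁ = 0 ∧ ξ₂ = 0 => hne (by simp [hc.1, hc.2]))) with h1 | h1
    · have : ξ₁ ^ 2 > 0 := by positivity
      nlinarith [sq_nonneg ξ₂]
    · have : ξ₂ ^ 2 > 0 := by positivity
      nlinarith [sq_nonneg ξ₁]
  have hsqS : 0 < Real.sqrt (ξ₁ ^ 2 + ξ₂ ^ 2) := Real.sqrt_pos.mpr hξpos
  have hsqg : 0 < Real.sqrt (g + 1) := Real.sqrt_pos.mpr hg1
  have hinv1 : (g + 1)⁻¹ * Real.sqrt (g + 1) = 1 / Real.sqrt (g + 1) := by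
    rw [← Real.mul_self_sqrt hg1.le]
    field_simp
    rw [Real.sqrt_sq hsqg.le]
  rw [hinv1, div_le_div_iff₀ hsqg hsqS, one_mul]
  -- need √(ξ₁²+ξ₂²) ≤ (3π/4) √(g+1)
  have hcomp : ξ₁ ^ 2 + ξ₂ ^ 2 ≤ (3 * Real.pi / 4) ^ 2 * (g + 1) := by
    nlinarith [sq_nonneg Real.pi]
  calc Real.sqrt (ξ₁ ^ 2 + ξ₂ ^ 2) ≤ Real.sqrt ((3 * Real.pi / 4) ^ 2 * (g + 1)) :=
        Real.sqrt_le_sqrt hcomp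
    _ = 3 * Real.pi / 4 * Real.sqrt (g + 1) := by
        rw [Real.sqrt_mul (sq_nonneg _), Real.sqrt_sq (by positivity)]
end

section
/- There exists C > 0 such that for all h > 0 and ξ ∈ ℝ² with hξ ∈ [-3π/2, 3π/2]², the operator norm of (G₀(ξ) - iI)⁻¹ - (G̃₀ₕˢ(ξ) - iI)⁻¹ is at most Ch. -/
set_option synthInstance.maxHeartbeats 1000000
set_option maxHeartbeats 1000000
set_option linter.unusedTactic false
set_option linter.unreachableTactic false

noncomputable def G0two (m ξ₁ ξ₂ : ℝ) : Matrix (Fin 2) (Fin 2) ℂ :=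
  !![(m : ℂ), (ξ₁ : ℂ) - Complex.I * ξ₂;
     (ξ₁ : ℂ) + Complex.I * ξ₂, (-m : ℂ)]

section Helpers

open Complex

lemma matOpNorm_mul_le' {n : Type*} [Fintype n] [DecidableEq n] (A B : Matrix n n ℂ) :
    matOpNorm (A * B) ≤ matOpNorm A * matOpNorm B := by
  unfold matOpNorm
  rw [map_mul]
  exact norm_mul_le _ _

lemma matOpNorm_smul' {n : Type*} [Fintype n] [DecidableEq n] (c : ℂ) (A : Matrix n n ℂ) :
    matOpNorm (c • A) = ‖c‖ * matOpNorm A := by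
  unfold matOpNorm
  rw [map_smul]
  exact norm_smul c (Matrix.toEuclideanCLM (𝕜 := ℂ) A)

lemma matOpNorm_nonneg' {n : Type*} [Fintype n] [DecidableEq n] (A : Matrix n n ℂ) :
    0 ≤ matOpNorm A := norm_nonneg _

lemma matOpNorm_le_entries_s12 (A : Matrix (Fin 2) (Fin 2) ℂ) :
    matOpNorm A ≤ ‖A 0 0‖ + ‖A 0 1‖ + ‖A 1 0‖ + ‖A 1 1‖ := by
  refine ContinuousLinearMap.opNorm_le_bound _ (by positivity) fun x => ?_
  set y := Matrix.toEuclideanCLM (𝕜 := ℂ) A x with hy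
  have hyi : ∀ i, y i = A i 0 * x 0 + A i 1 * x 1 := by
    intro i
    have := congrFun (Matrix.ofLp_toEuclideanCLM (𝕜 := ℂ) A x) i
    rw [hy, this]; simp [Matrix.toLin'_apply, Matrix.mulVec, dotProduct, Fin.sum_univ_two]
  have hxj : ∀ j, ‖x j‖ ≤ ‖x‖ := by
    intro j
    rw [EuclideanSpace.norm_eq]
    rw [show (Finset.univ.sum fun i => ‖x i‖ ^ 2) = ‖x 0‖^2 + ‖x 1‖^2 from Fin.sum_univ_two _]
    rw [show ‖x j‖ = Real.sqrt (‖x j‖^2) from (Real.sqrt_sq (norm_nonneg _)).symm]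
    apply Real.sqrt_le_sqrt
    fin_cases j <;> simp <;> nlinarith [sq_nonneg ‖x 0‖, sq_nonneg ‖x 1‖,
      norm_nonneg (x 0), norm_nonneg (x 1)]
  have hybound : ∀ i, ‖y i‖ ≤ (‖A i 0‖ + ‖A i 1‖) * ‖x‖ := by
    intro i
    rw [hyi i]
    calc ‖A i 0 * x 0 + A i 1 * x 1‖ ≤ ‖A i 0 * x 0‖ + ‖A i 1 * x 1‖ := norm_add_le _ _
    _ = ‖A i 0‖ * ‖x 0‖ + ‖A i 1‖ * ‖x 1‖ := by rw [norm_mul, norm_mul]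
    _ ≤ ‖A i 0‖ * ‖x‖ + ‖A i 1‖ * ‖x‖ := by
        gcongr <;> [exact hxj 0; exact hxj 1]
    _ = (‖A i 0‖ + ‖A i 1‖) * ‖x‖ := by ring
  have hny : ‖y‖ ≤ ‖y 0‖ + ‖y 1‖ := by
    rw [EuclideanSpace.norm_eq]
    rw [show (Finset.univ.sum fun i => ‖y i‖ ^ 2) = ‖y 0‖^2 + ‖y 1‖^2 from Fin.sum_univ_two _]
    calc Real.sqrt (‖y 0‖^2 + ‖y 1‖^2) ≤ Real.sqrt ((‖y 0‖ + ‖y 1‖)^2) := by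
          apply Real.sqrt_le_sqrt; nlinarith [norm_nonneg (y 0), norm_nonneg (y 1)]
    _ = ‖y 0‖ + ‖y 1‖ := Real.sqrt_sq (by positivity)
  calc ‖y‖ ≤ ‖y 0‖ + ‖y 1‖ := hny
  _ ≤ (‖A 0 0‖ + ‖A 0 1‖) * ‖x‖ + (‖A 1 0‖ + ‖A 1 1‖) * ‖x‖ :=
      add_le_add (hybound 0) (hybound 1)
  _ = (‖A 0 0‖ + ‖A 0 1‖ + ‖A 1 0‖ + ‖A 1 1‖) * ‖x‖ := by ring

noncomputable def Mres (a b₁ b₂ : ℝ) : Matrix (Fin 2) (Fin 2) ℂ :=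
  !![(a : ℂ) - I, (b₁ : ℂ) - I * b₂; (b₁ : ℂ) + I * b₂, (-a : ℂ) - I]

noncomputable def Mplus (a b₁ b₂ : ℝ) : Matrix (Fin 2) (Fin 2) ℂ :=
  !![(a : ℂ) + I, (b₁ : ℂ) - I * b₂; (b₁ : ℂ) + I * b₂, (-a : ℂ) + I]

lemma Mres_mul_Mplus (a b₁ b₂ : ℝ) :
    Mres a b₁ b₂ * Mplus a b₁ b₂ = (((a^2 + b₁^2 + b₂^2 + 1 : ℝ) : ℂ)) • 1 := by
  rw [Mres, Mplus, Matrix.mul_fin_two, Matrix.one_fin_two, Matrix.smul_of]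
  ext i j
  fin_cases i <;> fin_cases j <;>
    · simp [Complex.ext_iff]
      try ring_nf
      try simp [Complex.I_sq, ← Complex.ofReal_pow]
      try constructor <;> try ring
      try ring

lemma Mres_mul_inv (a b₁ b₂ : ℝ) :
    Mres a b₁ b₂ * ((((a^2 + b₁^2 + b₂^2 + 1 : ℝ)⁻¹ : ℝ) : ℂ) • Mplus a b₁ b₂) = 1 := by
  have hd : (a^2 + b₁^2 + b₂^2 + 1 : ℝ) ≠ 0 := by positivity
  rw [Matrix.mul_smul, Mres_mul_Mplus, smul_smul, ← Complex.ofReal_mul,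
    inv_mul_cancel₀ hd]
  simp

lemma Mres_inv (a b₁ b₂ : ℝ) :
    (Mres a b₁ b₂)⁻¹ = (((a^2 + b₁^2 + b₂^2 + 1 : ℝ)⁻¹ : ℝ) : ℂ) • Mplus a b₁ b₂ :=
  Matrix.inv_eq_right_inv (Mres_mul_inv a b₁ b₂)

lemma matOpNorm_Mplus_le (a b₁ b₂ : ℝ) :
    matOpNorm (Mplus a b₁ b₂) ≤ 2*|a| + 2 + 2*|b₁| + 2*|b₂| := by
  refine (matOpNorm_le_entries_s12 _).trans ?_
  have e00 : (Mplus a b₁ b₂) 0 0 = (a : ℂ) + I := by simp [Mplus]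
  have e01 : (Mplus a b₁ b₂) 0 1 = (b₁ : ℂ) - I * b₂ := by simp [Mplus]
  have e10 : (Mplus a b₁ b₂) 1 0 = (b₁ : ℂ) + I * b₂ := by simp [Mplus]
  have e11 : (Mplus a b₁ b₂) 1 1 = (-a : ℂ) + I := by simp [Mplus]
  rw [e00, e01, e10, e11]
  have h1 : ‖(a : ℂ) + I‖ ≤ |a| + 1 := by
    simpa using norm_add_le (a : ℂ) I
  have h2 : ‖(b₁ : ℂ) - I * b₂‖ ≤ |b₁| + |b₂| := by
    simpa using norm_sub_le (b₁ : ℂ) (I * b₂)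
  have h3 : ‖(b₁ : ℂ) + I * b₂‖ ≤ |b₁| + |b₂| := by
    simpa using norm_add_le (b₁ : ℂ) (I * b₂)
  have h4 : ‖(-a : ℂ) + I‖ ≤ |a| + 1 := by
    simpa using norm_add_le (-a : ℂ) I
  linarith

lemma matOpNorm_Mres_sub_le (a b₁ b₂ a' b₁' b₂' : ℝ) :
    matOpNorm (Mres a' b₁' b₂' - Mres a b₁ b₂) ≤
      2*|a' - a| + 2*|b₁' - b₁| + 2*|b₂' - b₂| := by
  refine (matOpNorm_le_entries_s12 _).trans ?_
  have e00 : (Mres a' b₁' b₂' - Mres a b₁ b₂) 0 0 = ((a' - a : ℝ) : ℂ) := by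
    simp [Mres]; try push_cast; try ring
  have e01 : (Mres a' b₁' b₂' - Mres a b₁ b₂) 0 1
      = ((b₁' - b₁ : ℝ) : ℂ) - I * ((b₂' - b₂ : ℝ) : ℂ) := by
    simp [Mres]; try push_cast; try ring
  have e10 : (Mres a' b₁' b₂' - Mres a b₁ b₂) 1 0
      = ((b₁' - b₁ : ℝ) : ℂ) + I * ((b₂' - b₂ : ℝ) : ℂ) := by
    simp [Mres]; try push_cast; try ring
  have e11 : (Mres a' b₁' b₂' - Mres a b₁ b₂) 1 1 = ((-(a' - a) : ℝ) : ℂ) := by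
    simp [Mres]; try push_cast; try ring
  rw [e00, e01, e10, e11]
  have h2 : ‖((b₁' - b₁ : ℝ) : ℂ) - I * ((b₂' - b₂ : ℝ) : ℂ)‖ ≤ |b₁' - b₁| + |b₂' - b₂| := by
    refine (norm_sub_le _ _).trans ?_
    rw [Complex.norm_real, Real.norm_eq_abs, norm_mul, Complex.norm_I, one_mul,
      Complex.norm_real, Real.norm_eq_abs]
  have h3 : ‖((b₁' - b₁ : ℝ) : ℂ) + I * ((b₂' - b₂ : ℝ) : ℂ)‖ ≤ |b₁' - b₁| + |b₂' - b₂| := by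
    refine (norm_add_le _ _).trans ?_
    rw [Complex.norm_real, Real.norm_eq_abs, norm_mul, Complex.norm_I, one_mul,
      Complex.norm_real, Real.norm_eq_abs]
  have h1 : ‖((a' - a : ℝ) : ℂ)‖ = |a' - a| := by
    rw [Complex.norm_real, Real.norm_eq_abs]
  have h4 : ‖((-(a' - a) : ℝ) : ℂ)‖ = |a' - a| := by
    rw [Complex.norm_real, Real.norm_eq_abs, abs_neg]
  rw [h1, h4]
  linarith

lemma Mres_diff_bound (a b₁ b₂ a' b₁' b₂' : ℝ) :
    matOpNorm ((Mres a b₁ b₂)⁻¹ - (Mres a' b₁' b₂')⁻¹) ≤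
      ((2*|a| + 2 + 2*|b₁| + 2*|b₂|) / (a^2 + b₁^2 + b₂^2 + 1)) *
      (2*|a' - a| + 2*|b₁' - b₁| + 2*|b₂' - b₂|) *
      ((2*|a'| + 2 + 2*|b₁'| + 2*|b₂'|) / (a'^2 + b₁'^2 + b₂'^2 + 1)) := by
  set P := (((a^2 + b₁^2 + b₂^2 + 1 : ℝ)⁻¹ : ℝ) : ℂ) • Mplus a b₁ b₂ with hPdef
  set Q := (((a'^2 + b₁'^2 + b₂'^2 + 1 : ℝ)⁻¹ : ℝ) : ℂ) • Mplus a' b₁' b₂' with hQdef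
  have hMP : Mres a b₁ b₂ * P = 1 := Mres_mul_inv a b₁ b₂
  have hMQ : Mres a' b₁' b₂' * Q = 1 := Mres_mul_inv a' b₁' b₂'
  have hPM : P * Mres a b₁ b₂ = 1 := mul_eq_one_comm.mp hMP
  have hid : P - Q = P * (Mres a' b₁' b₂' - Mres a b₁ b₂) * Q := by
    calc P - Q = P * (Mres a' b₁' b₂' * Q) - (P * Mres a b₁ b₂) * Q := by
          rw [hMQ, hPM, Matrix.mul_one, Matrix.one_mul]
    _ = P * (Mres a' b₁' b₂' - Mres a b₁ b₂) * Q := by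
          noncomm_ring
  rw [Mres_inv a b₁ b₂, Mres_inv a' b₁' b₂', ← hPdef, ← hQdef, hid]
  have hP : matOpNorm P ≤ (2*|a| + 2 + 2*|b₁| + 2*|b₂|) / (a^2 + b₁^2 + b₂^2 + 1) := by
    rw [hPdef, matOpNorm_smul']
    have : ‖Complex.ofReal ((a^2 + b₁^2 + b₂^2 + 1)⁻¹)‖ = (a^2 + b₁^2 + b₂^2 + 1)⁻¹ := by
      rw [Complex.norm_real, Real.norm_eq_abs, abs_of_pos (by positivity)]
    rw [this, div_eq_inv_mul]
    exact mul_le_mul_of_nonneg_left (matOpNorm_Mplus_le a b₁ b₂) (by positivity)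
  have hQb : matOpNorm Q ≤ (2*|a'| + 2 + 2*|b₁'| + 2*|b₂'|) / (a'^2 + b₁'^2 + b₂'^2 + 1) := by
    rw [hQdef, matOpNorm_smul']
    have : ‖Complex.ofReal ((a'^2 + b₁'^2 + b₂'^2 + 1)⁻¹)‖ = (a'^2 + b₁'^2 + b₂'^2 + 1)⁻¹ := by
      rw [Complex.norm_real, Real.norm_eq_abs, abs_of_pos (by positivity)]
    rw [this, div_eq_inv_mul]
    exact mul_le_mul_of_nonneg_left (matOpNorm_Mplus_le a' b₁' b₂') (by positivity)
  have hD := matOpNorm_Mres_sub_le a b₁ b₂ a' b₁' b₂'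
  calc matOpNorm (P * (Mres a' b₁' b₂' - Mres a b₁ b₂) * Q)
      ≤ matOpNorm (P * (Mres a' b₁' b₂' - Mres a b₁ b₂)) * matOpNorm Q :=
        matOpNorm_mul_le' _ _
    _ ≤ (matOpNorm P * matOpNorm (Mres a' b₁' b₂' - Mres a b₁ b₂)) * matOpNorm Q :=
        mul_le_mul_of_nonneg_right (matOpNorm_mul_le' _ _) (matOpNorm_nonneg' _)
    _ ≤ _ := by
        refine mul_le_mul (mul_le_mul hP hD (matOpNorm_nonneg' _) (by positivity))
          hQb (matOpNorm_nonneg' _) (by positivity)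

end Helpers

section SinHelpers
open Real

lemma abs_sin_sub_le_aux {x : ℝ} (hx : 0 ≤ x) : |Real.sin x - x| ≤ 2 * x^2 := by
  rcases le_or_gt x 1 with h1 | h1
  · rcases eq_or_lt_of_le hx with rfl | hx'
    · simp
    · have hlow := Real.sin_gt_sub_cube hx'
      have hup := Real.sin_le hx
      rw [abs_of_nonpos (by linarith)]
      nlinarith
  · rw [abs_le]
    constructor <;> nlinarith [Real.sin_le_one x, Real.neg_one_le_sin x]

lemma abs_sin_sub_le (x : ℝ) : |Real.sin x - x| ≤ 2 * x^2 := by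
  rcases le_or_gt 0 x with hx | hx
  · exact abs_sin_sub_le_aux hx
  · have := abs_sin_sub_le_aux (neg_nonneg.mpr hx.le)
    rw [Real.sin_neg] at this
    calc |Real.sin x - x| = |(-Real.sin x) - (-x)| := by rw [← abs_neg]; ring_nf
    _ ≤ 2 * (-x)^2 := this
    _ = 2 * x^2 := by ring

lemma sin_half_lb {x : ℝ} (h0 : 0 ≤ x) (h1 : x ≤ 3 * π / 2) : x / 8 ≤ Real.sin (x / 2) := by
  rcases le_or_gt x π with hx | hx
  · have hj := Real.mul_le_sin (x := x / 2) (by linarith) (by linarith)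
    have he : 2 / π * (x / 2) = x / π := by field_simp
    rw [he] at hj
    refine le_trans ?_ hj
    have hπ : π ≤ 8 := by linarith [Real.pi_lt_d2]
    exact div_le_div_of_nonneg_left h0 Real.pi_pos hπ
  · have hc : Real.sin (x / 2) = Real.cos (x / 2 - π / 2) := (Real.cos_sub_pi_div_two _).symm
    rw [hc]
    have hlow := Real.one_sub_sq_div_two_le_cos (x := x / 2 - π / 2)
    nlinarith [Real.pi_lt_d2, Real.pi_gt_three, sq_nonneg (x / 2 - π / 2)]

lemma sin_half_sq {θ : ℝ} (h : |θ| ≤ 3 * π / 2) : θ^2 / 64 ≤ Real.sin (θ / 2)^2 := by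
  rcases le_or_gt 0 θ with h0 | h0
  · rw [abs_of_nonneg h0] at h
    have := sin_half_lb h0 h
    nlinarith
  · rw [abs_of_neg h0] at h
    have := sin_half_lb (x := -θ) (by linarith) h
    have hs : Real.sin (θ / 2) = -Real.sin (-θ / 2) := by
      rw [show (-θ) / 2 = -(θ/2) by ring, Real.sin_neg]; ring
    rw [hs]
    nlinarith

end SinHelpers

theorem resolvent_diff_bound_2D_symmetric_mod (m : ℝ) (hm : 0 ≤ m) :
    ∃ C > 0, ∀ h : ℝ, 0 < h → ∀ ξ₁ ξ₂ : ℝ,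
      h * ξ₁ ∈ Set.Icc (-(3 * Real.pi / 2)) (3 * Real.pi / 2) →
      h * ξ₂ ∈ Set.Icc (-(3 * Real.pi / 2)) (3 * Real.pi / 2) →
      matOpNorm ((G0two m ξ₁ ξ₂ - Complex.I • (1 : Matrix (Fin 2) (Fin 2) ℂ))⁻¹
          - (G0s2mod h m ξ₁ ξ₂ - Complex.I • (1 : Matrix (Fin 2) (Fin 2) ℂ))⁻¹)
        ≤ C * h := by
  refine ⟨384, by norm_num, ?_⟩
  intro h hh ξ₁ ξ₂ hb1 hb2
  obtain ⟨hb1l, hb1r⟩ := hb1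
  obtain ⟨hb2l, hb2r⟩ := hb2
  set s₁ : ℝ := Real.sin (h * ξ₁) / h with hs₁
  set s₂ : ℝ := Real.sin (h * ξ₂) / h with hs₂
  set f : ℝ := fh h ξ₁ ξ₂ with hfdef
  set u₁ : ℝ := Real.sin (h * ξ₁ / 2) ^ 2 with hu₁
  set u₂ : ℝ := Real.sin (h * ξ₂ / 2) ^ 2 with hu₂
  have hf0 : 0 ≤ f := by
    rw [hfdef, fh]
    positivity
  -- matrix identifications
  have hA : G0two m ξ₁ ξ₂ - Complex.I • (1 : Matrix (Fin 2) (Fin 2) ℂ) = Mres m ξ₁ ξ₂ := by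
    ext i j
    fin_cases i <;> fin_cases j <;>
      · simp [G0two, Mres, Matrix.one_apply]
        try push_cast
        try ring
  have hB : G0s2mod h m ξ₁ ξ₂ - Complex.I • (1 : Matrix (Fin 2) (Fin 2) ℂ)
      = Mres (m + f) s₁ s₂ := by
    ext i j
    fin_cases i <;> fin_cases j <;>
      · simp [G0s2mod, G0s2, Mres, Matrix.one_apply, hs₁, hs₂, hfdef]
        try push_cast
        try ring
  rw [hA, hB]
  refine (Mres_diff_bound m ξ₁ ξ₂ (m + f) s₁ s₂).trans ?_
  -- real-number estimates
  set d : ℝ := m^2 + ξ₁^2 + ξ₂^2 + 1 with hd_def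
  set d' : ℝ := (m + f)^2 + s₁^2 + s₂^2 + 1 with hd'_def
  have hd : (0:ℝ) < d := by rw [hd_def]; positivity
  have hd' : (0:ℝ) < d' := by rw [hd'_def]; positivity
  set NA : ℝ := 2*|m| + 2 + 2*|ξ₁| + 2*|ξ₂| with hNA_def
  set NB : ℝ := 2*|m + f| + 2 + 2*|s₁| + 2*|s₂| with hNB_def
  set E : ℝ := 2*|m + f - m| + 2*|s₁ - ξ₁| + 2*|s₂ - ξ₂| with hE_def
  -- bound on f
  have hf_le : f ≤ h * ξ₁^2 + h * ξ₂^2 := by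
    have hu1 : u₁ ≤ (h * ξ₁ / 2)^2 := Real.sin_sq_le_sq
    have hu2 : u₂ ≤ (h * ξ₂ / 2)^2 := Real.sin_sq_le_sq
    have h4 : (0:ℝ) ≤ 4 / h := by positivity
    have e1 : 4 / h * (h * ξ₁ / 2)^2 = h * ξ₁^2 := by field_simp; ring
    have e2 : 4 / h * (h * ξ₂ / 2)^2 = h * ξ₂^2 := by field_simp; ring
    calc f = 4 / h * u₁ + 4 / h * u₂ := by rw [hfdef, fh]
    _ ≤ 4 / h * (h * ξ₁ / 2)^2 + 4 / h * (h * ξ₂ / 2)^2 := by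
        exact add_le_add (mul_le_mul_of_nonneg_left hu1 h4) (mul_le_mul_of_nonneg_left hu2 h4)
    _ = h * ξ₁^2 + h * ξ₂^2 := by rw [e1, e2]
  -- bounds on |s_j - ξ_j|
  have habs1 : |s₁ - ξ₁| ≤ 2 * h * ξ₁^2 := by
    have key := abs_sin_sub_le (h * ξ₁)
    have hrep : s₁ - ξ₁ = (Real.sin (h * ξ₁) - h * ξ₁) / h := by
      rw [hs₁]; field_simp
    rw [hrep, abs_div, abs_of_pos hh, div_le_iff₀ hh]
    calc |Real.sin (h * ξ₁) - h * ξ₁| ≤ 2 * (h * ξ₁)^2 := key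
    _ = 2 * h * ξ₁^2 * h := by ring
  have habs2 : |s₂ - ξ₂| ≤ 2 * h * ξ₂^2 := by
    have key := abs_sin_sub_le (h * ξ₂)
    have hrep : s₂ - ξ₂ = (Real.sin (h * ξ₂) - h * ξ₂) / h := by
      rw [hs₂]; field_simp
    rw [hrep, abs_div, abs_of_pos hh, div_le_iff₀ hh]
    calc |Real.sin (h * ξ₂) - h * ξ₂| ≤ 2 * (h * ξ₂)^2 := key
    _ = 2 * h * ξ₂^2 * h := by ring
  -- bound on E
  have hfm : |m + f - m| = f := by
    rw [show m + f - m = f by ring, abs_of_nonneg hf0]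
  have hE : E ≤ 6 * h * (ξ₁^2 + ξ₂^2) := by
    rw [hE_def, hfm]
    linarith only [habs1, habs2, hf_le]
  have hE0 : 0 ≤ E := by rw [hE_def]; positivity
  -- square bounds
  have hNA2 : NA^2 ≤ 16 * d := by
    rw [hNA_def, hd_def]
    nlinarith only [sq_abs m, sq_abs ξ₁, sq_abs ξ₂, sq_nonneg (|m| - 1),
      sq_nonneg (|m| - |ξ₁|), sq_nonneg (|m| - |ξ₂|), sq_nonneg (|ξ₁| - 1),
      sq_nonneg (|ξ₂| - 1), sq_nonneg (|ξ₁| - |ξ₂|)]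
  have hNB2 : NB^2 ≤ 16 * d' := by
    rw [hNB_def, hd'_def]
    nlinarith only [sq_abs (m + f), sq_abs s₁, sq_abs s₂, sq_nonneg (|m + f| - 1),
      sq_nonneg (|m + f| - |s₁|), sq_nonneg (|m + f| - |s₂|), sq_nonneg (|s₁| - 1),
      sq_nonneg (|s₂| - 1), sq_nonneg (|s₁| - |s₂|)]
  have hrd : ξ₁^2 + ξ₂^2 ≤ d := by rw [hd_def]; linarith only [sq_nonneg m]
  -- key lower bound for d'
  have hrd' : ξ₁^2 + ξ₂^2 ≤ 16 * d' := by
    have hu1l : (h * ξ₁)^2 / 64 ≤ u₁ := by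
      have := sin_half_sq (θ := h * ξ₁) (abs_le.mpr ⟨hb1l, hb1r⟩)
      simpa [hu₁] using this
    have hu2l : (h * ξ₂)^2 / 64 ≤ u₂ := by
      have := sin_half_sq (θ := h * ξ₂) (abs_le.mpr ⟨hb2l, hb2r⟩)
      simpa [hu₂] using this
    have hu10 : 0 ≤ u₁ := by rw [hu₁]; positivity
    have hu20 : 0 ≤ u₂ := by rw [hu₂]; positivity
    have hs1sq : h^2 * s₁^2 = 4 * u₁ * (1 - u₁) := by
      have hsin1 : Real.sin (h * ξ₁) = 2 * Real.sin (h * ξ₁ / 2) * Real.cos (h * ξ₁ / 2) := by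
        have := Real.sin_two_mul (h * ξ₁ / 2)
        rw [show 2 * (h * ξ₁ / 2) = h * ξ₁ by ring] at this
        exact this
      have hcos1 : Real.cos (h * ξ₁ / 2)^2 = 1 - u₁ := by rw [hu₁]; exact Real.cos_sq' _
      have e1 : h^2 * s₁^2 = Real.sin (h * ξ₁)^2 := by rw [hs₁]; field_simp
      rw [e1, hsin1]
      rw [show (2 * Real.sin (h * ξ₁ / 2) * Real.cos (h * ξ₁ / 2))^2
        = 4 * Real.sin (h * ξ₁ / 2)^2 * Real.cos (h * ξ₁ / 2)^2 by ring, hcos1, hu₁]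
    have hs2sq : h^2 * s₂^2 = 4 * u₂ * (1 - u₂) := by
      have hsin2 : Real.sin (h * ξ₂) = 2 * Real.sin (h * ξ₂ / 2) * Real.cos (h * ξ₂ / 2) := by
        have := Real.sin_two_mul (h * ξ₂ / 2)
        rw [show 2 * (h * ξ₂ / 2) = h * ξ₂ by ring] at this
        exact this
      have hcos2 : Real.cos (h * ξ₂ / 2)^2 = 1 - u₂ := by rw [hu₂]; exact Real.cos_sq' _
      have e2 : h^2 * s₂^2 = Real.sin (h * ξ₂)^2 := by rw [hs₂]; field_simp
      rw [e2, hsin2]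
      rw [show (2 * Real.sin (h * ξ₂ / 2) * Real.cos (h * ξ₂ / 2))^2
        = 4 * Real.sin (h * ξ₂ / 2)^2 * Real.cos (h * ξ₂ / 2)^2 by ring, hcos2, hu₂]
    have hfh : h * f = 4 * u₁ + 4 * u₂ := by
      rw [hfdef, fh, hu₁, hu₂]; field_simp; try ring
    have hmaux : (0:ℝ) ≤ m^2 + 2*m*f := by
      linarith only [mul_nonneg hm hf0, sq_nonneg m]
    have hmf2 : h^2 * f^2 ≤ h^2 * (m + f)^2 := by
      nlinarith only [mul_nonneg (sq_nonneg h) hmaux]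
    have hA1 : h^2 * f^2 = (4*u₁ + 4*u₂)^2 := by
      calc h^2 * f^2 = (h * f)^2 := by ring
      _ = (4*u₁ + 4*u₂)^2 := by rw [hfh]
    have hQ : (h*ξ₁)^2 + (h*ξ₂)^2 ≤
        16*(4*u₁*(1 - u₁)) + 16*(4*u₂*(1 - u₂)) + 16*((4*u₁ + 4*u₂)^2) := by
      nlinarith only [hu1l, hu2l, mul_nonneg hu10 hu20, sq_nonneg (u₁ - u₂), hu10, hu20]
    have hh2 : (0:ℝ) < h^2 := by positivity
    rw [← mul_le_mul_iff_right₀ hh2]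
    rw [hd'_def]
    have ea : h^2 * (ξ₁^2 + ξ₂^2) = (h*ξ₁)^2 + (h*ξ₂)^2 := by ring
    have eb : h^2 * (16 * ((m + f)^2 + s₁^2 + s₂^2 + 1))
        = 16*(h^2*(m + f)^2) + 16*(h^2*s₁^2) + 16*(h^2*s₂^2) + 16*h^2 := by ring
    rw [ea, eb, hs1sq, hs2sq]
    have hsq : (0:ℝ) ≤ 16 * h^2 := by positivity
    linarith only [hQ, hmf2, hA1, hsq]
  -- final combination
  have heq : NA / d * E * (NB / d') = NA * E * NB / (d * d') := by
    rw [div_mul_eq_mul_div, div_mul_div_comm]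
  rw [heq, div_le_iff₀ (by positivity)]
  have hNA0 : 0 ≤ NA := by rw [hNA_def]; positivity
  have hNB0 : 0 ≤ NB := by rw [hNB_def]; positivity
  have key : (NA * E * NB)^2 ≤ (384 * h * (d * d'))^2 := by
    have e2 : E^2 ≤ 36 * h^2 * (ξ₁^2 + ξ₂^2)^2 := by
      have := mul_self_le_mul_self hE0 hE
      calc E^2 = E * E := sq E
      _ ≤ (6 * h * (ξ₁^2 + ξ₂^2)) * (6 * h * (ξ₁^2 + ξ₂^2)) := this
      _ = 36 * h^2 * (ξ₁^2 + ξ₂^2)^2 := by ring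
    have r4 : (ξ₁^2 + ξ₂^2)^2 ≤ d * (16 * d') := by
      calc (ξ₁^2 + ξ₂^2)^2 = (ξ₁^2 + ξ₂^2) * (ξ₁^2 + ξ₂^2) := sq _
      _ ≤ d * (16 * d') := mul_le_mul hrd hrd' (by positivity) hd.le
    have t1 : E^2 ≤ 36 * h^2 * (d * (16 * d')) := by
      refine e2.trans ?_
      exact mul_le_mul_of_nonneg_left r4 (by positivity)
    calc (NA * E * NB)^2 = NA^2 * E^2 * NB^2 := by ring
    _ ≤ (16 * d) * (36 * h^2 * (d * (16 * d'))) * (16 * d') := by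
        exact mul_le_mul (mul_le_mul hNA2 t1 (sq_nonneg E) (by positivity))
          hNB2 (sq_nonneg NB) (by positivity)
    _ = (384 * h * (d * d'))^2 := by ring
  have := (pow_le_pow_iff_left₀ (by positivity) (by positivity) (two_ne_zero)).mp key
  linarith only [this]
end

section
/- For each fixed m ≥ 0 there exists c > 0 (one may take c = 8[(1+m²)(1+(8+m)²)]^{-1/2}) such that for all h ∈ (0,1], the maximum over ξ ∈ [-π/h, π/h]² of ‖(G₀ₕˢ(ξ) - iI)⁻¹ - (G̃₀ₕˢ(ξ) - iI)⁻¹‖ is at least c. -/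
lemma abs_entry_le_matOpNorm (A : Matrix (Fin 2) (Fin 2) ℂ) (i j : Fin 2) :
    ‖A i j‖ ≤ matOpNorm A := by
  have hv : ‖(EuclideanSpace.single j (1:ℂ))‖ = 1 := by
    simp [EuclideanSpace.norm_single]
  have h1 : ‖Matrix.toEuclideanCLM (𝕜 := ℂ) A (EuclideanSpace.single j (1:ℂ))‖ ≤ matOpNorm A := by
    calc ‖Matrix.toEuclideanCLM (𝕜 := ℂ) A (EuclideanSpace.single j (1:ℂ))‖
        ≤ matOpNorm A * ‖(EuclideanSpace.single j (1:ℂ))‖ :=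
          (Matrix.toEuclideanCLM (𝕜 := ℂ) A).le_opNorm _
      _ = matOpNorm A := by rw [hv, mul_one]
  refine le_trans ?_ h1
  set x := Matrix.toEuclideanCLM (𝕜 := ℂ) A (EuclideanSpace.single j (1:ℂ)) with hx
  have hxi : x i = A i j := by
    have : x = (WithLp.equiv _ _).symm (Matrix.toLin' A (Pi.single j 1)) := by
      rw [hx]
      rw [show (EuclideanSpace.single j (1:ℂ)) = (WithLp.equiv 2 (Fin 2 → ℂ)).symm (Pi.single j 1) from rfl]
      exact Matrix.toEuclideanCLM_toLp A _
    rw [this]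
    simp [Matrix.toLin'_apply, Matrix.mulVec_single]
  rw [← hxi]
  rw [EuclideanSpace.norm_eq x]
  have : ‖x i‖ = Real.sqrt (‖x i‖^2) := by
    rw [Real.sqrt_sq (by positivity)]
  rw [this]
  apply Real.sqrt_le_sqrt
  exact Finset.single_le_sum (f := fun k => ‖x k‖^2) (fun k _ => by positivity) (Finset.mem_univ i)

lemma diag_inv (a d : ℂ) (ha : a ≠ 0) (hd : d ≠ 0) :
    (!![a, 0; 0, d])⁻¹ = !![a⁻¹, 0; 0, d⁻¹] :=
  Matrix.inv_eq_right_inv (by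
    rw [Matrix.mul_fin_two]
    simp [mul_inv_cancel₀ ha, mul_inv_cancel₀ hd, Matrix.one_fin_two])

lemma key_ineq (m t : ℝ) (hm : 0 ≤ m) (ht : 8 ≤ t) :
    8 / Real.sqrt ((1 + m ^ 2) * (1 + (8 + m) ^ 2))
      ≤ t / (Real.sqrt (m ^ 2 + 1) * Real.sqrt ((m + t) ^ 2 + 1)) := by
  have h1 : (0:ℝ) < Real.sqrt ((1 + m ^ 2) * (1 + (8 + m) ^ 2)) := by positivity
  have h2 : (0:ℝ) < Real.sqrt (m ^ 2 + 1) * Real.sqrt ((m + t) ^ 2 + 1) := by positivity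
  rw [div_le_div_iff₀ h1 h2]
  have hsq : ∀ x : ℝ, 0 ≤ x → Real.sqrt x ^ 2 = x := fun x hx => Real.sq_sqrt hx
  rw [← pow_le_pow_iff_left₀ (by positivity) (by positivity) (n := 2) (by norm_num)]
  rw [mul_pow, mul_pow, mul_pow, hsq _ (by positivity), hsq _ (by positivity),
    hsq _ (by positivity)]
  nlinarith [sq_nonneg t, sq_nonneg m, mul_nonneg hm (sub_nonneg.2 ht), sq_nonneg (m*t),
    mul_nonneg (mul_nonneg hm hm) (sub_nonneg.2 ht), sq_nonneg (t - 8),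
    mul_nonneg (mul_nonneg hm (sub_nonneg.2 ht)) (add_nonneg hm (le_trans (by norm_num) ht))]

theorem symmetric_mod_nonconvergence_2D (m : ℝ) (hm : 0 ≤ m) :
    ∃ c : ℝ, c = 8 / Real.sqrt ((1 + m ^ 2) * (1 + (8 + m) ^ 2)) ∧ 0 < c ∧
      ∀ h : ℝ, 0 < h → h ≤ 1 →
        ∃ ξ₁ ∈ Set.Icc (-(Real.pi / h)) (Real.pi / h),
        ∃ ξ₂ ∈ Set.Icc (-(Real.pi / h)) (Real.pi / h),
          c ≤ matOpNorm ((G0s2 h m ξ₁ ξ₂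
                - Complex.I • (1 : Matrix (Fin 2) (Fin 2) ℂ))⁻¹
              - (G0s2mod h m ξ₁ ξ₂
                - Complex.I • (1 : Matrix (Fin 2) (Fin 2) ℂ))⁻¹) := by
  refine ⟨8 / Real.sqrt ((1 + m ^ 2) * (1 + (8 + m) ^ 2)), rfl, by positivity, ?_⟩
  intro h hh hh1
  have hπh : 0 < Real.pi / h := by positivity
  set ξ : ℝ := Real.pi / h with hξ
  have hmem : ξ ∈ Set.Icc (-(Real.pi / h)) (Real.pi / h) :=
    ⟨by linarith, le_refl _⟩
  refine ⟨ξ, hmem, ξ, hmem, ?_⟩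
  set t : ℝ := 8 / h with htdef
  have ht8 : 8 ≤ t := by
    rw [htdef, le_div_iff₀ hh]; linarith
  have ht0 : 0 < t := by linarith
  have hπ : h * ξ = Real.pi := by rw [hξ]; field_simp
  have hπ2 : h * ξ / 2 = Real.pi / 2 := by rw [hπ]
  have hfh : fh h ξ ξ = t := by
    rw [fh, hπ2, Real.sin_pi_div_two, htdef]; ring
  -- the two matrices are diagonal
  set a : ℂ := (m : ℂ) - Complex.I with ha
  set b : ℂ := ((m + t : ℝ) : ℂ) - Complex.I with hb
  set d₁ : ℂ := (-m : ℂ) - Complex.I with hd₁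
  set d₂ : ℂ := ((-(m + t) : ℝ) : ℂ) - Complex.I with hd₂
  have hA : G0s2 h m ξ ξ - Complex.I • (1 : Matrix (Fin 2) (Fin 2) ℂ)
      = !![a, 0; 0, d₁] := by
    ext i j
    fin_cases i <;> fin_cases j <;>
      simp [G0s2, hπ, Real.sin_pi, Matrix.one_apply, ha, hd₁]
  have hB : G0s2mod h m ξ ξ - Complex.I • (1 : Matrix (Fin 2) (Fin 2) ℂ)
      = !![b, 0; 0, d₂] := by
    rw [G0s2mod, hfh]
    ext i j
    fin_cases i <;> fin_cases j <;>
      · first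
        | (simp [G0s2, hπ, Real.sin_pi, Matrix.one_apply]; rw [hb]; push_cast; ring)
        | (simp [G0s2, hπ, Real.sin_pi, Matrix.one_apply]; rw [hd₂]; push_cast; ring)
        | simp [G0s2, hπ, Real.sin_pi, Matrix.one_apply]
  have ha0 : a ≠ 0 := by
    intro he; have := congrArg Complex.im he; simp [ha] at this
  have hb0 : b ≠ 0 := by
    intro he; have := congrArg Complex.im he; simp [hb] at this
  have hd₁0 : d₁ ≠ 0 := by
    intro he; have := congrArg Complex.im he; simp [hd₁] at this
  have hd₂0 : d₂ ≠ 0 := by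
    intro he; have := congrArg Complex.im he; simp [hd₂] at this
  rw [hA, hB, diag_inv a d₁ ha0 hd₁0, diag_inv b d₂ hb0 hd₂0]
  have hentry : (!![a⁻¹, 0; 0, d₁⁻¹] - !![b⁻¹, 0; 0, d₂⁻¹]) 0 0 = a⁻¹ - b⁻¹ := by
    simp
  calc 8 / Real.sqrt ((1 + m ^ 2) * (1 + (8 + m) ^ 2))
      ≤ t / (Real.sqrt (m ^ 2 + 1) * Real.sqrt ((m + t) ^ 2 + 1)) := key_ineq m t hm ht8
    _ = ‖((!![a⁻¹, 0; 0, d₁⁻¹] - !![b⁻¹, 0; 0, d₂⁻¹]) 0 0)‖ := by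
        rw [hentry]
        have habs : ‖a‖ = Real.sqrt (m ^ 2 + 1) := by
          rw [Complex.norm_def, Complex.normSq_apply]
          simp [ha]; ring_nf
        have hbabs : ‖b‖ = Real.sqrt ((m + t) ^ 2 + 1) := by
          rw [Complex.norm_def, Complex.normSq_apply]
          simp [hb]; ring_nf
        have hdiff : a⁻¹ - b⁻¹ = ((t : ℝ) : ℂ) / (a * b) := by
          field_simp
          rw [hb, ha]
          push_cast
          ring
        rw [hdiff, norm_div, norm_mul, habs, hbabs, Complex.norm_real, Real.norm_eq_abs, abs_of_pos ht0]
    _ ≤ matOpNorm (!![a⁻¹, 0; 0, d₁⁻¹] - !![b⁻¹, 0; 0, d₂⁻¹]) :=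
        abs_entry_le_matOpNorm _ 0 0
end

section
/- There exists c > 0 such that for all h > 0 and ξ ∈ ℝ² with hξ ∈ [-3π/2, 3π/2]², the quantity g̃₀ₕᶠᵇ(ξ) = (m + fₕ(ξ))² + (4/h²)sin²(hξ₁/2) + (4/h²)sin²(hξ₂/2) + (2/h²)[sin(h(ξ₁-ξ₂)) - sin(hξ₁) + sin(hξ₂)] satisfies g̃₀ₕᶠᵇ(ξ) ≥ c|ξ|². -/
noncomputable def g0fb2mod (h m ξ₁ ξ₂ : ℝ) : ℝ :=
  (m + fh h ξ₁ ξ₂) ^ 2 + 4 / h ^ 2 * Real.sin (h * ξ₁ / 2) ^ 2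
    + 4 / h ^ 2 * Real.sin (h * ξ₂ / 2) ^ 2
    + 2 / h ^ 2 * (Real.sin (h * (ξ₁ - ξ₂)) - Real.sin (h * ξ₁) + Real.sin (h * ξ₂))

set_option maxHeartbeats 1000000

open Real

lemma sin_quarter_lb {x : ℝ} (h0 : 0 ≤ x) (h1 : x ≤ 3 * π / 4) : x / 4 ≤ Real.sin x := by
  have hπ0 : 0 < π := Real.pi_pos
  rcases le_or_gt x (π / 2) with hx | hx
  · have h2 := Real.mul_le_sin h0 hx
    have hπ : π ≤ 4 := by linarith [Real.pi_le_four]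
    have h4 : x / 4 ≤ 2 / π * x := by
      rw [show 2 / π * x = 2 * x / π by ring, div_le_div_iff₀ (by norm_num) hπ0]
      nlinarith
    linarith
  · have heq : Real.sin x = Real.cos (x - π / 2) := by
      rw [← Real.cos_pi_div_two_sub, ← Real.cos_neg]; ring_nf
    have h2 : Real.cos (π / 4) ≤ Real.cos (x - π / 2) := by
      apply Real.cos_le_cos_of_nonneg_of_le_pi (by linarith) (by linarith) (by linarith)
    rw [heq]
    rw [Real.cos_pi_div_four] at h2
    have hs : (1.4 : ℝ) ≤ Real.sqrt 2 := by
      nlinarith [Real.sq_sqrt (by norm_num : (0:ℝ) ≤ 2), Real.sqrt_nonneg 2]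
    have hπ : π < 3.15 := Real.pi_lt_d2
    nlinarith

lemma sin_half_sq_lb {a : ℝ} (ha : |a| ≤ 3 * π / 2) : a ^ 2 / 64 ≤ Real.sin (a / 2) ^ 2 := by
  have h0 : (0:ℝ) ≤ |a| / 2 := by positivity
  have h1 : |a| / 2 ≤ 3 * π / 4 := by linarith
  have h8 : |a| / 8 ≤ Real.sin (|a| / 2) := by linarith [sin_quarter_lb h0 h1]
  have hsq : Real.sin (a / 2) ^ 2 = Real.sin (|a| / 2) ^ 2 := by
    rcases abs_cases a with ⟨h, _⟩ | ⟨h, _⟩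
    · rw [h]
    · rw [h, show -a / 2 = -(a / 2) by ring, Real.sin_neg]; ring
  rw [hsq]
  nlinarith [mul_self_le_mul_self (by positivity : (0:ℝ) ≤ |a| / 8) h8, sq_abs a]

lemma cross_identity (a b : ℝ) :
    Real.sin (a - b) - Real.sin a + Real.sin b
      = 4 * Real.sin (a / 2) * Real.sin (b / 2) * Real.sin ((a - b) / 2) := by
  have ha : Real.sin a = 2 * Real.sin (a/2) * Real.cos (a/2) := by
    rw [← Real.sin_two_mul]; ring_nf
  have hb : Real.sin b = 2 * Real.sin (b/2) * Real.cos (b/2) := by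
    rw [← Real.sin_two_mul]; ring_nf
  have hab : Real.sin (a - b) = 2 * Real.sin ((a-b)/2) * Real.cos ((a-b)/2) := by
    rw [← Real.sin_two_mul]; ring_nf
  have hs : Real.sin ((a-b)/2) = Real.sin (a/2) * Real.cos (b/2) - Real.cos (a/2) * Real.sin (b/2) := by
    rw [show (a-b)/2 = a/2 - b/2 by ring, Real.sin_sub]
  have hc : Real.cos ((a-b)/2) = Real.cos (a/2) * Real.cos (b/2) + Real.sin (a/2) * Real.sin (b/2) := by
    rw [show (a-b)/2 = a/2 - b/2 by ring, Real.cos_sub]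
  rw [ha, hb, hab, hs, hc]
  have hu := Real.sin_sq_add_cos_sq (a/2)
  have hv := Real.sin_sq_add_cos_sq (b/2)
  linear_combination (2 * Real.sin (a/2) * Real.cos (a/2)) * hv
    - (2 * Real.sin (b/2) * Real.cos (b/2)) * hu

lemma key_bound {a b : ℝ} (ha : |a| ≤ 3 * π / 2) (hb : |b| ≤ 3 * π / 2) :
    (1:ℝ)/262144 * (a ^ 2 + b ^ 2) ≤
      (4 * Real.sin (a/2) ^ 2 + 4 * Real.sin (b/2) ^ 2) ^ 2
        + 4 * Real.sin (a/2) ^ 2 + 4 * Real.sin (b/2) ^ 2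
        + 2 * (Real.sin (a - b) - Real.sin a + Real.sin b) := by
  rw [cross_identity]
  set s := Real.sin (a/2) with hsdef
  set t := Real.sin (b/2) with htdef
  set w := Real.sin ((a-b)/2) with hwdef
  have hsa : a ^ 2 / 64 ≤ s ^ 2 := sin_half_sq_lb ha
  have htb : b ^ 2 / 64 ≤ t ^ 2 := sin_half_sq_lb hb
  have h1 : |s| ≤ |a| / 2 := by
    have := Real.abs_sin_le_abs (x := a/2); rwa [abs_div, abs_two] at this
  have h2 : |t| ≤ |b| / 2 := by
    have := Real.abs_sin_le_abs (x := b/2); rwa [abs_div, abs_two] at this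
  have h3 : |w| ≤ (|a| + |b|) / 2 := by
    have h4 := Real.abs_sin_le_abs (x := (a-b)/2)
    rw [abs_div, abs_two] at h4
    have h5 : |a - b| ≤ |a| + |b| := abs_sub a b
    linarith
  rcases le_or_gt (a ^ 2 + b ^ 2) ((1:ℝ)/1024) with hsm | hlg
  · -- small region
    have haδ : |a| ≤ 1/32 := by
      apply abs_le_of_sq_le_sq _ (by norm_num)
      nlinarith [sq_nonneg b]
    have hbδ : |b| ≤ 1/32 := by
      apply abs_le_of_sq_le_sq _ (by norm_num)
      nlinarith [sq_nonneg a]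
    have hstw : -(s * t * w) ≤ |s| * |t| * |w| := by
      calc -(s * t * w) ≤ |s * t * w| := neg_le_abs _
        _ = |s| * |t| * |w| := by rw [abs_mul, abs_mul]
    have hprod : |s| * |t| * |w| ≤ (|a|/2) * (|b|/2) * ((|a| + |b|)/2) := by
      have hst : |s| * |t| ≤ (|a|/2) * (|b|/2) :=
        mul_le_mul h1 h2 (abs_nonneg _) (by positivity)
      exact mul_le_mul hst h3 (abs_nonneg _) (by positivity)
    have hcub : (|a|/2) * (|b|/2) * ((|a| + |b|)/2) ≤ (a ^ 2 + b ^ 2) / 256 := by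
      nlinarith [sq_abs a, sq_abs b, abs_nonneg a, abs_nonneg b,
        mul_nonneg (mul_nonneg (abs_nonneg a) (abs_nonneg b)) (abs_nonneg a),
        mul_nonneg (mul_nonneg (abs_nonneg a) (abs_nonneg b)) (abs_nonneg b),
        mul_nonneg (by linarith : (0:ℝ) ≤ 1/32 - |a|) (sq_nonneg b),
        mul_nonneg (by linarith : (0:ℝ) ≤ 1/32 - |b|) (sq_nonneg a),
        mul_nonneg (by linarith : (0:ℝ) ≤ 1/32 - |a|) (sq_nonneg a),
        mul_nonneg (by linarith : (0:ℝ) ≤ 1/32 - |b|) (sq_nonneg b)]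
    have hcr : -(s * t * w) ≤ (a ^ 2 + b ^ 2) / 256 := by linarith
    nlinarith [sq_nonneg (4 * s ^ 2 + 4 * t ^ 2)]
  · -- large region
    have hw1 : |w| ≤ 1 := abs_le.mpr ⟨Real.neg_one_le_sin _, Real.sin_le_one _⟩
    have hG : -(s * t * w) ≤ (s ^ 2 + t ^ 2) / 2 := by
      have e1 : -(s * t * w) ≤ |s| * |t| * |w| := by
        calc -(s * t * w) ≤ |s * t * w| := neg_le_abs _
          _ = |s| * |t| * |w| := by rw [abs_mul, abs_mul]
      have e2 : |s| * |t| * |w| ≤ |s| * |t| :=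
        mul_le_of_le_one_right (by positivity) hw1
      have e3 : |s| * |t| ≤ (s ^ 2 + t ^ 2) / 2 := by
        nlinarith [sq_nonneg (|s| - |t|), sq_abs s, sq_abs t]
      linarith
    have hS : (a ^ 2 + b ^ 2) / 16 ≤ 4 * s ^ 2 + 4 * t ^ 2 := by linarith
    have hX : (1:ℝ)/1024 ≤ a ^ 2 + b ^ 2 := le_of_lt hlg
    have hsq : (a ^ 2 + b ^ 2) ^ 2 / 256 ≤ (4 * s ^ 2 + 4 * t ^ 2) ^ 2 := by
      nlinarith [hS, sq_nonneg a, sq_nonneg b, sq_nonneg s, sq_nonneg t]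
    have hXX : (a ^ 2 + b ^ 2) / 262144 ≤ (a ^ 2 + b ^ 2) ^ 2 / 256 := by
      nlinarith [mul_nonneg (by linarith : (0:ℝ) ≤ a ^ 2 + b ^ 2 - 1/1024)
        (by positivity : (0:ℝ) ≤ a ^ 2 + b ^ 2)]
    linarith

theorem g0fb2mod_lower_bound (m : ℝ) (hm : 0 ≤ m) :
    ∃ c > 0, ∀ h : ℝ, 0 < h → ∀ ξ₁ ξ₂ : ℝ,
      h * ξ₁ ∈ Set.Icc (-(3 * Real.pi / 2)) (3 * Real.pi / 2) →
      h * ξ₂ ∈ Set.Icc (-(3 * Real.pi / 2)) (3 * Real.pi / 2) →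
      c * (ξ₁ ^ 2 + ξ₂ ^ 2) ≤ g0fb2mod h m ξ₁ ξ₂ := by
  refine ⟨1/262144, by norm_num, ?_⟩
  intro h hh ξ₁ ξ₂ hx1 hx2
  obtain ⟨l1, r1⟩ := hx1
  obtain ⟨l2, r2⟩ := hx2
  have ha : |h * ξ₁| ≤ 3 * π / 2 := abs_le.mpr ⟨by linarith, by linarith⟩
  have hb : |h * ξ₂| ≤ 3 * π / 2 := abs_le.mpr ⟨by linarith, by linarith⟩
  have key := key_bound ha hb
  have hE : h ^ 2 * g0fb2mod h m ξ₁ ξ₂ =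
      (h * m + (4 * Real.sin (h * ξ₁ / 2) ^ 2 + 4 * Real.sin (h * ξ₂ / 2) ^ 2)) ^ 2
        + 4 * Real.sin (h * ξ₁ / 2) ^ 2 + 4 * Real.sin (h * ξ₂ / 2) ^ 2
        + 2 * (Real.sin (h * ξ₁ - h * ξ₂) - Real.sin (h * ξ₁) + Real.sin (h * ξ₂)) := by
    unfold g0fb2mod fh
    rw [show h * (ξ₁ - ξ₂) = h * ξ₁ - h * ξ₂ by ring]
    field_simp
  have h2pos : (0:ℝ) < h ^ 2 := by positivity
  rw [← mul_le_mul_iff_right₀ h2pos, hE]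
  have hS : (0:ℝ) ≤ 4 * Real.sin (h * ξ₁ / 2) ^ 2 + 4 * Real.sin (h * ξ₂ / 2) ^ 2 := by
    positivity
  have hhm : (0:ℝ) ≤ h * m := mul_nonneg hh.le hm
  nlinarith [key, sq_nonneg (h * m)]
end
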